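/- arXiv:math/0410210 — 3 statements merged into one kernel-verified Lean document; each statement's English description precedes it below -/
import Mathlib

section
/- Let k ≥ 2 and let f_1, f_2, … be automorphisms of ℂ^k. Suppose there exist constants 0 < a < b < 1 with b² < a such that for every n ≥ 1 and every z ∈ ℂ^k with ‖z‖ ≤ 1 one has a‖z‖ ≤ ‖f_n(z)‖ ≤ b‖z‖. Then the basin of attraction Ω* = {z ∈ ℂ^k : f_n ∘ ⋯ ∘ f_1(z) → 0 as n → ∞} is biholomorphic to ℂ^k. -/
open Filter Metric Set Topology
open scoped ENNReal NNReal

noncomputable section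

/-- `ℂ^k` with the Euclidean norm. -/
abbrev Ek (k : ℕ) := EuclideanSpace ℂ (Fin k)

/-- `f` is an automorphism of `ℂ^k`: a holomorphic bijection with holomorphic inverse. -/
def IsAutomorphismOf {k : ℕ} (f : Ek k → Ek k) : Prop :=
  Differentiable ℂ f ∧ ∃ g : Ek k → Ek k, Differentiable ℂ g ∧
    (∀ z, g (f z) = z) ∧ (∀ z, f (g z) = z)

/-- `seqComp f n = f n ∘ ⋯ ∘ f 1` (and `seqComp f 0 = id`). -/
def seqComp {k : ℕ} (f : ℕ → Ek k → Ek k) : ℕ → Ek k → Ek k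
  | 0 => id
  | n + 1 => f (n + 1) ∘ seqComp f n



/-- Iterated Schwarz lemma: vanishing to second order gives a quadratic bound. -/
lemma sq_schwarz {F : Type*} [NormedAddCommGroup F] [NormedSpace ℂ F] [CompleteSpace F] {φ : ℂ → F}
    (hd : Differentiable ℂ φ) (h0 : φ 0 = 0) (h1 : deriv φ 0 = 0) {M : ℝ} (hM : 0 ≤ M)
    (hb : ∀ l : ℂ, l ∈ ball (0:ℂ) 1 → ‖φ l‖ ≤ M) {l : ℂ} (hl : l ∈ ball (0:ℂ) 1) :
    ‖φ l‖ ≤ M * ‖l‖ ^ 2 := by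
  rcases eq_or_ne l 0 with rfl | hl0
  · simp [h0]
  have hn : ‖l‖ ≠ 0 := by simpa using hl0
  have hl2 : (0:ℝ) < ‖l‖ ^ 2 := by positivity
  have key : ∀ ε : ℝ, 0 < ε → ‖φ l‖ ≤ (M + 2 * ε) * ‖l‖ ^ 2 := by
    intro ε hε
    set ψ := dslope φ 0 with hψ
    have hψd : DifferentiableOn ℂ ψ (ball (0:ℂ) 1) :=
      (Complex.differentiableOn_dslope (ball_mem_nhds _ one_pos)).mpr hd.differentiableOn
    have maps1 : MapsTo φ (ball (0:ℂ) 1) (ball (φ 0) (M + ε)) := by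
      intro x hx
      rw [mem_ball, dist_eq_norm, h0, sub_zero]
      exact lt_of_le_of_lt (hb x hx) (by linarith)
    have hψb : ∀ x ∈ ball (0:ℂ) 1, ‖ψ x‖ ≤ M + ε := by
      intro x hx
      simpa using Complex.norm_dslope_le_div_of_mapsTo_ball hd.differentiableOn (maps1.mono_right ball_subset_closedBall) hx
    have ψ0 : ψ 0 = 0 := by rw [hψ, dslope_same]; exact h1
    have maps2 : MapsTo ψ (ball (0:ℂ) 1) (ball (ψ 0) (M + 2 * ε)) := by
      intro x hx
      rw [mem_ball, dist_eq_norm, ψ0, sub_zero]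
      exact lt_of_le_of_lt (hψb x hx) (by linarith)
    have hχ : ‖dslope ψ 0 l‖ ≤ M + 2 * ε := by
      simpa using Complex.norm_dslope_le_div_of_mapsTo_ball hψd (maps2.mono_right ball_subset_closedBall) hl
    have e1 : dslope ψ 0 l = l⁻¹ • ψ l := by
      rw [dslope_of_ne _ hl0, slope_def_module, ψ0, sub_zero, sub_zero]
    have e2 : ψ l = l⁻¹ • φ l := by
      rw [hψ, dslope_of_ne _ hl0, slope_def_module, h0, sub_zero, sub_zero]
    have n1 : ‖ψ l‖ = ‖l‖ * ‖dslope ψ 0 l‖ := by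
      rw [e1, norm_smul, norm_inv, ← mul_assoc, mul_inv_cancel₀ hn, one_mul]
    have n2 : ‖φ l‖ = ‖l‖ * ‖ψ l‖ := by
      rw [e2, norm_smul, norm_inv, ← mul_assoc, mul_inv_cancel₀ hn, one_mul]
    rw [n2, n1]
    calc ‖l‖ * (‖l‖ * ‖dslope ψ 0 l‖) = ‖l‖ ^ 2 * ‖dslope ψ 0 l‖ := by ring
      _ ≤ ‖l‖ ^ 2 * (M + 2 * ε) := mul_le_mul_of_nonneg_left hχ (by positivity)
      _ = (M + 2 * ε) * ‖l‖ ^ 2 := by ring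
  have hl1 : ‖l‖ ^ 2 ≤ 1 := by
    have : ‖l‖ < 1 := by simpa [mem_ball, dist_eq_norm] using hl
    nlinarith [norm_nonneg l]
  refine le_of_forall_pos_le_add ?_
  intro ε hε
  calc ‖φ l‖ ≤ (M + 2 * (ε / 2)) * ‖l‖ ^ 2 := key _ (by linarith)
    _ = M * ‖l‖ ^ 2 + ε * ‖l‖ ^ 2 := by ring
    _ ≤ M * ‖l‖ ^ 2 + ε := by nlinarith




variable {k : ℕ}

/-- Cauchy-type estimate: if `u` is holomorphic on `ball x ρ` with `‖u‖ ≤ M` there,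
then `‖u' x‖ ≤ 2 M / ρ`. -/
lemma cauchy_deriv_bound {u : Ek k → Ek k} {u' : Ek k → (Ek k →L[ℂ] Ek k)} {x : Ek k}
    {ρ M : ℝ} (hρ : 0 < ρ)
    (hu : ∀ y ∈ ball x ρ, HasFDerivAt u (u' y) y)
    (hM : ∀ y ∈ ball x ρ, ‖u y‖ ≤ M) :
    ‖u' x‖ ≤ 2 * M / ρ := by
  have hM0 : 0 ≤ M := le_trans (norm_nonneg _) (hM x (mem_ball_self hρ))
  refine ContinuousLinearMap.opNorm_le_bound _ (by positivity) fun v => ?_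
  rcases eq_or_ne v 0 with rfl | hv
  · simp
  have hv0 : (0:ℝ) < ‖v‖ := norm_pos_iff.mpr hv
  set c : ℝ := ρ / (2 * ‖v‖) with hc
  have hc0 : 0 < c := by positivity
  set w : Ek k := c • v with hw
  have hwn : ‖w‖ = ρ / 2 := by
    rw [hw, norm_smul, Real.norm_eq_abs, abs_of_pos hc0, hc]
    field_simp
  -- the auxiliary one-variable function
  set g : ℂ → Ek k := fun l => u (x + l • w) with hg
  have haff : ∀ l : ℂ, HasDerivAt (fun l : ℂ => x + l • w) w l := by
    intro l
    simpa using ((hasDerivAt_id l).smul_const w).const_add x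
  have hmem : ∀ l : ℂ, l ∈ ball (0:ℂ) 2 → x + l • w ∈ ball x ρ := by
    intro l hl
    rw [mem_ball] at hl ⊢
    rw [dist_eq_norm] at hl ⊢
    simp only [add_sub_cancel_left, sub_zero] at hl ⊢
    rw [norm_smul, hwn]
    calc ‖l‖ * (ρ / 2) < 2 * (ρ / 2) := by
          apply mul_lt_mul_of_pos_right _ (by positivity)
          simpa using hl
      _ = ρ := by ring
  have hgd : DifferentiableOn ℂ g (ball (0:ℂ) 2) := by
    intro l hl
    exact (((hu _ (hmem l hl)).differentiableAt.comp l (haff l).differentiableAt)).differentiableWithinAt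
  have hgderiv : HasDerivAt g (u' x w) 0 := by
    have h0 : x + (0:ℂ) • w = x := by simp
    have := (h0 ▸ (hu x (mem_ball_self hρ))).comp_hasDerivAt (0:ℂ) (haff 0)
    simp [h0] at this
    exact this
  have key : ∀ ε : ℝ, 0 < ε → ‖u' x w‖ ≤ (2 * M + ε) / 2 := by
    intro ε hε
    have maps : MapsTo g (ball (0:ℂ) 2) (ball (g 0) (2 * M + ε)) := by
      intro l hl
      rw [mem_ball, dist_eq_norm]
      have b1 : ‖g l‖ ≤ M := hM _ (hmem l hl)
      have b2 : ‖g 0‖ ≤ M := hM _ (hmem 0 (by simp))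
      calc ‖g l - g 0‖ ≤ ‖g l‖ + ‖g 0‖ := norm_sub_le _ _
        _ ≤ 2 * M := by linarith
        _ < 2 * M + ε := by linarith
    have := Complex.norm_deriv_le_div_of_mapsTo_ball hgd (maps.mono_right ball_subset_closedBall) two_pos
    rwa [hgderiv.deriv] at this
  have hball : ‖u' x w‖ ≤ M := by
    refine le_of_forall_pos_le_add ?_
    intro ε hε
    calc ‖u' x w‖ ≤ (2 * M + 2 * ε) / 2 := key _ (by linarith)
      _ = M + ε := by ring
  have hsm : u' x w = c • u' x v := by rw [hw, (u' x).map_smul_of_tower]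
  have heq : ‖u' x w‖ = c * ‖u' x v‖ := by
    rw [hsm, norm_smul, Real.norm_eq_abs, abs_of_pos hc0]
  rw [heq] at hball
  have hfin : ‖u' x v‖ ≤ M / c := by
    rw [le_div_iff₀ hc0, mul_comm]
    exact hball
  calc ‖u' x v‖ ≤ M / c := hfin
    _ = 2 * M / ρ * ‖v‖ := by rw [hc]; field_simp

/-- An entire map has continuous derivative. -/
lemma entire_fderiv_continuous {u : Ek k → Ek k} (hu : Differentiable ℂ u) :
    Continuous fun x => fderiv ℂ u x := by
  rw [continuous_iff_continuousAt]
  intro x₀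
  rw [Metric.continuousAt_iff]
  intro ε hε
  have hc : UniformContinuousOn u (closedBall x₀ 2) :=
    (isCompact_closedBall x₀ 2).uniformContinuousOn_of_continuous hu.continuous.continuousOn
  rw [Metric.uniformContinuousOn_iff] at hc
  obtain ⟨δ, hδ0, hδ⟩ := hc (ε / 8) (by positivity)
  refine ⟨min δ 1, by positivity, ?_⟩
  intro x hx
  set h : Ek k := x - x₀ with hh
  have hhn : ‖h‖ < min δ 1 := by rwa [hh, ← dist_eq_norm]
  set w : Ek k → Ek k := fun y => u (y + h) - u y with hwdef
  have hw' : ∀ y, HasFDerivAt w (fderiv ℂ u (y + h) - fderiv ℂ u y) y := by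
    intro y
    have h1 : HasFDerivAt (fun y => u (y + h)) (fderiv ℂ u (y + h)) y := by
      have := (hu (y + h)).hasFDerivAt.comp y ((hasFDerivAt_id y).add_const h)
      simp at this
      exact this
    exact h1.sub (hu y).hasFDerivAt
  have hwb : ∀ y ∈ ball x₀ 1, ‖w y‖ ≤ ε / 8 := by
    intro y hy
    rw [mem_ball, dist_eq_norm] at hy
    have m1 : y ∈ closedBall x₀ 2 := by
      rw [mem_closedBall, dist_eq_norm]; linarith
    have m2 : y + h ∈ closedBall x₀ 2 := by
      rw [mem_closedBall, dist_eq_norm]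
      have : ‖y + h - x₀‖ ≤ ‖y - x₀‖ + ‖h‖ := by
        calc ‖y + h - x₀‖ = ‖(y - x₀) + h‖ := by rw [add_sub_right_comm]
          _ ≤ ‖y - x₀‖ + ‖h‖ := norm_add_le _ _
      have := lt_of_lt_of_le hhn (min_le_right _ _)
      linarith
    have : dist (u (y + h)) (u y) < ε / 8 := by
      apply hδ _ m2 _ m1
      rw [dist_eq_norm]
      simpa using lt_of_lt_of_le hhn (min_le_left _ _)
    rw [hwdef, ← dist_eq_norm]
    exact this.le
  have := cauchy_deriv_bound one_pos (fun y hy => hw' y) hwb (x := x₀)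
  have hx0h : x₀ + h = x := by rw [hh]; abel
  rw [dist_eq_norm]
  have : ‖fderiv ℂ u x - fderiv ℂ u x₀‖ ≤ 2 * (ε / 8) / 1 := by
    rw [← hx0h]
    exact this
  calc ‖fderiv ℂ u x - fderiv ℂ u x₀‖ ≤ 2 * (ε / 8) / 1 := this
    _ < ε := by linarith

/-- An entire map is strictly differentiable. -/
lemma entire_hasStrictFDerivAt {u : Ek k → Ek k} (hu : Differentiable ℂ u) (x : Ek k) :
    HasStrictFDerivAt u (fderiv ℂ u x) x :=
  hasStrictFDerivAt_of_hasFDerivAt_of_continuousAt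
    (Eventually.of_forall fun y => (hu y).hasFDerivAt)
    (entire_fderiv_continuous hu).continuousAt

/-- The derivative of a (global) biholomorphism, as a continuous linear equivalence. -/
def invDerivEquiv {u v : Ek k → Ek k} (hu : Differentiable ℂ u) (hv : Differentiable ℂ v)
    (h1 : ∀ z, v (u z) = z) (h2 : ∀ z, u (v z) = z) (y : Ek k) : Ek k ≃L[ℂ] Ek k :=
  ContinuousLinearEquiv.equivOfInverse (fderiv ℂ u y) (fderiv ℂ v (u y))
    (by
      intro z
      have hcomp : HasFDerivAt (v ∘ u) ((fderiv ℂ v (u y)).comp (fderiv ℂ u y)) y :=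
        (hv (u y)).hasFDerivAt.comp y (hu y).hasFDerivAt
      have hid : (v ∘ u) = id := funext fun z => h1 z
      rw [hid] at hcomp
      have := hcomp.unique (hasFDerivAt_id y)
      exact congrFun (congrArg DFunLike.coe this) z)
    (by
      intro z
      have hcomp : HasFDerivAt (u ∘ v) ((fderiv ℂ u (v (u y))).comp (fderiv ℂ v (u y))) (u y) :=
        (hu (v (u y))).hasFDerivAt.comp (u y) (hv (u y)).hasFDerivAt
      rw [h1 y] at hcomp
      have hid : (u ∘ v) = id := funext fun z => h2 z
      rw [hid] at hcomp
      have := hcomp.unique (hasFDerivAt_id (u y))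
      exact congrFun (congrArg DFunLike.coe this) z)

@[simp] lemma invDerivEquiv_coe {u v : Ek k → Ek k} (hu : Differentiable ℂ u)
    (hv : Differentiable ℂ v) (h1 : ∀ z, v (u z) = z) (h2 : ∀ z, u (v z) = z) (y : Ek k) :
    (invDerivEquiv hu hv h1 h2 y : Ek k →L[ℂ] Ek k) = fderiv ℂ u y := rfl







/-- Composition of the maps `f (m+1), …, f (m+n)` (tail composition starting after time `m`). -/
def Tcomp {k : ℕ} (f : ℕ → Ek k → Ek k) (m : ℕ) : ℕ → Ek k → Ek k
  | 0 => id
  | n + 1 => f (m + n + 1) ∘ Tcomp f m n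

lemma seqComp_eq_Tcomp {k : ℕ} (f : ℕ → Ek k → Ek k) (n : ℕ) : seqComp f n = Tcomp f 0 n := by
  induction n with
  | zero => rfl
  | succ n ih => show f (n+1) ∘ seqComp f n = f (0+n+1) ∘ Tcomp f 0 n; rw [ih]; norm_num

lemma Tcomp_add {k : ℕ} (f : ℕ → Ek k → Ek k) (m n : ℕ) (z : Ek k) :
    Tcomp f 0 (m + n) z = Tcomp f m n (Tcomp f 0 m z) := by
  induction n with
  | zero => rfl
  | succ n ih =>
      show Tcomp f 0 ((m + n) + 1) z = f (m + n + 1) (Tcomp f m n (Tcomp f 0 m z))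
      rw [← ih]
      show f (0 + (m + n) + 1) (Tcomp f 0 (m+n) z) = _
      norm_num

/-- The hypotheses of the theorem, bundled. -/
structure Squeeze (k : ℕ) (f : ℕ → Ek k → Ek k) (a b : ℝ) : Prop where
  hf : ∀ n, 1 ≤ n → IsAutomorphismOf (f n)
  ha : 0 < a
  hab : a < b
  hb1 : b < 1
  hba : b ^ 2 < a
  hbound : ∀ n, 1 ≤ n → ∀ z : Ek k, ‖z‖ ≤ 1 → a * ‖z‖ ≤ ‖f n z‖ ∧ ‖f n z‖ ≤ b * ‖z‖

namespace Squeeze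

variable {k : ℕ} {f : ℕ → Ek k → Ek k} {a b : ℝ}

lemma hb0 (S : Squeeze k f a b) : 0 < b := lt_trans S.ha S.hab

lemma f_diff (S : Squeeze k f a b) {n : ℕ} (hn : 1 ≤ n) : Differentiable ℂ (f n) := (S.hf n hn).1

def ginv (S : Squeeze k f a b) (n : ℕ) : Ek k → Ek k := if h : 1 ≤ n then ((S.hf n h).2).choose else id

lemma ginv_diff (S : Squeeze k f a b) (n : ℕ) : Differentiable ℂ (S.ginv n) := by
  unfold ginv
  split
  · exact ((S.hf n ‹_›).2).choose_spec.1
  · exact differentiable_id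

lemma ginv_left (S : Squeeze k f a b) {n : ℕ} (hn : 1 ≤ n) : ∀ z, S.ginv n (f n z) = z := by
  unfold ginv
  rw [dif_pos hn]
  exact ((S.hf n hn).2).choose_spec.2.1

lemma ginv_right (S : Squeeze k f a b) {n : ℕ} (hn : 1 ≤ n) : ∀ z, f n (S.ginv n z) = z := by
  unfold ginv
  rw [dif_pos hn]
  exact ((S.hf n hn).2).choose_spec.2.2

lemma f_zero (S : Squeeze k f a b) {n : ℕ} (hn : 1 ≤ n) : f n 0 = 0 := by
  have := S.hbound n hn 0 (by simp)
  rw [norm_zero, mul_zero, mul_zero] at this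
  exact norm_le_zero_iff.mp this.2

lemma Tcomp_diff (S : Squeeze k f a b) (m n : ℕ) : Differentiable ℂ (Tcomp f m n) := by
  induction n with
  | zero => exact differentiable_id
  | succ n ih => exact (S.f_diff (by omega : 1 ≤ m + n + 1)).comp ih

lemma Tcomp_zero (S : Squeeze k f a b) (m n : ℕ) : Tcomp f m n 0 = 0 := by
  induction n with
  | zero => rfl
  | succ n ih => show f (m+n+1) (Tcomp f m n 0) = 0; rw [ih, S.f_zero (by omega)]

lemma Tcomp_norm_le (S : Squeeze k f a b) (m n : ℕ) {z : Ek k} (hz : ‖z‖ ≤ 1) : ‖Tcomp f m n z‖ ≤ b ^ n * ‖z‖ := by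
  induction n with
  | zero => simp [Tcomp]
  | succ n ih =>
      have hb0 := S.hb0
      have hy1 : ‖Tcomp f m n z‖ ≤ 1 := by
        refine le_trans ih ?_
        calc b ^ n * ‖z‖ ≤ 1 * 1 :=
              mul_le_mul (pow_le_one₀ hb0.le S.hb1.le) hz (norm_nonneg _) zero_le_one
          _ = 1 := by ring
      have := (S.hbound (m+n+1) (by omega) _ hy1).2
      calc ‖Tcomp f m (n+1) z‖ = ‖f (m+n+1) (Tcomp f m n z)‖ := rfl
        _ ≤ b * ‖Tcomp f m n z‖ := this
        _ ≤ b * (b ^ n * ‖z‖) := by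
            exact mul_le_mul_of_nonneg_left ih hb0.le
        _ = b ^ (n+1) * ‖z‖ := by ring

/-- Inverse of `Tcomp f 0 m`. -/
def Tinv (S : Squeeze k f a b) : ℕ → Ek k → Ek k
  | 0 => id
  | m + 1 => Tinv S m ∘ S.ginv (m + 1)

lemma Tinv_diff (S : Squeeze k f a b) (m : ℕ) : Differentiable ℂ (S.Tinv m) := by
  induction m with
  | zero => exact differentiable_id
  | succ m ih => exact ih.comp (S.ginv_diff (m+1))

lemma Tcomp_Tinv (S : Squeeze k f a b) (m : ℕ) (y : Ek k) : Tcomp f 0 m (S.Tinv m y) = y := by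
  induction m generalizing y with
  | zero => rfl
  | succ m ih =>
      show f (0+m+1) (Tcomp f 0 m (S.Tinv m (S.ginv (m+1) y))) = y
      rw [ih]
      have : (0:ℕ) + m + 1 = m + 1 := by omega
      rw [this, S.ginv_right (by omega)]

lemma Tinv_Tcomp (S : Squeeze k f a b) (m : ℕ) (z : Ek k) : S.Tinv m (Tcomp f 0 m z) = z := by
  induction m generalizing z with
  | zero => rfl
  | succ m ih =>
      show S.Tinv m (S.ginv (m+1) (f (0+m+1) (Tcomp f 0 m z))) = z
      have : (0:ℕ) + m + 1 = m + 1 := by omega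
      rw [this, S.ginv_left (by omega), ih]

/-- Derivative of `f n` at `0`, as a linear equivalence. -/
def lam (S : Squeeze k f a b) (n : ℕ) : Ek k ≃L[ℂ] Ek k :=
  if h : 1 ≤ n then
    invDerivEquiv (S.f_diff h) (S.ginv_diff n) (S.ginv_left h) (S.ginv_right h) 0
  else ContinuousLinearEquiv.refl ℂ (Ek k)

lemma lam_coe (S : Squeeze k f a b) {n : ℕ} (hn : 1 ≤ n) :
    (S.lam n : Ek k →L[ℂ] Ek k) = fderiv ℂ (f n) 0 := by
  unfold lam
  rw [dif_pos hn]
  exact invDerivEquiv_coe _ _ _ _ _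

lemma lam_apply (S : Squeeze k f a b) {n : ℕ} (hn : 1 ≤ n) (v : Ek k) : S.lam n v = fderiv ℂ (f n) 0 v := by
  rw [← S.lam_coe hn]; rfl

lemma lam_norm_le (S : Squeeze k f a b) {n : ℕ} (hn : 1 ≤ n) (v : Ek k) : ‖S.lam n v‖ ≤ b * ‖v‖ := by
  rcases eq_or_ne v 0 with rfl | hv
  · simp
  have hv0 : (0:ℝ) < ‖v‖ := norm_pos_iff.mpr hv
  have hvC : (‖v‖ : ℂ) ≠ 0 := by
    simpa using hv0.ne'
  set u : Ek k := (‖v‖ : ℂ)⁻¹ • v with hu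
  have hun : ‖u‖ = 1 := by
    rw [hu, norm_smul, norm_inv, Complex.norm_real, Real.norm_eq_abs, abs_of_pos hv0]
    field_simp
  set g : ℂ → Ek k := fun l => f n (l • u) with hg
  have haff : ∀ l : ℂ, HasDerivAt (fun l : ℂ => l • u) u l := by
    intro l; simpa using (hasDerivAt_id l).smul_const u
  have hgd : DifferentiableOn ℂ g (ball (0:ℂ) 1) := fun l _ =>
    ((S.f_diff hn _).hasFDerivAt.comp_hasDerivAt l (haff l)).differentiableAt.differentiableWithinAt
  have hg0 : g 0 = 0 := by rw [hg]; simp [S.f_zero hn]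
  have hgderiv : HasDerivAt g (fderiv ℂ (f n) 0 u) 0 := by
    have h0 : (0:ℂ) • u = 0 := by simp
    have := (S.f_diff hn ((0:ℂ) • u)).hasFDerivAt.comp_hasDerivAt (0:ℂ) (haff 0)
    rwa [h0] at this
  have key : ∀ ε : ℝ, 0 < ε → ‖fderiv ℂ (f n) 0 u‖ ≤ b + ε := by
    intro ε hε
    have maps : MapsTo g (ball (0:ℂ) 1) (ball (g 0) (b + ε)) := by
      intro l hl
      rw [mem_ball, dist_eq_norm, hg0, sub_zero]
      have hlu : ‖l • u‖ ≤ 1 := by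
        rw [norm_smul, hun, mul_one]
        exact le_of_lt (by simpa [mem_ball, dist_eq_norm] using hl)
      have := (S.hbound n hn _ hlu).2
      calc ‖g l‖ ≤ b * ‖l • u‖ := this
        _ ≤ b * 1 := mul_le_mul_of_nonneg_left hlu S.hb0.le
        _ < b + ε := by linarith
    have := Complex.norm_deriv_le_div_of_mapsTo_ball hgd (maps.mono_right ball_subset_closedBall) one_pos
    rw [hgderiv.deriv] at this
    simpa using this
  have hub : ‖fderiv ℂ (f n) 0 u‖ ≤ b := by
    refine le_of_forall_pos_le_add fun ε hε => key ε hε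
  have hvu : v = (‖v‖ : ℂ) • u := by
    rw [hu, smul_smul, mul_inv_cancel₀ hvC, one_smul]
  rw [S.lam_apply hn]
  have hsm2 : fderiv ℂ (f n) 0 v = (‖v‖ : ℂ) • fderiv ℂ (f n) 0 u := by
    conv_lhs => rw [hvu]
    rw [map_smul]
  calc ‖fderiv ℂ (f n) 0 v‖ = ‖(‖v‖:ℂ)‖ * ‖fderiv ℂ (f n) 0 u‖ := by
        rw [hsm2, norm_smul]
    _ = ‖v‖ * ‖fderiv ℂ (f n) 0 u‖ := by
        rw [Complex.norm_real, Real.norm_eq_abs, abs_of_pos hv0]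
    _ ≤ ‖v‖ * b := mul_le_mul_of_nonneg_left hub hv0.le
    _ = b * ‖v‖ := by ring

/-- The key quadratic estimate `‖f n z - Λ n z‖ ≤ 2 ‖z‖²` on the unit ball. -/
lemma quad (S : Squeeze k f a b) {n : ℕ} (hn : 1 ≤ n) {z : Ek k} (hz : ‖z‖ ≤ 1) :
    ‖f n z - S.lam n z‖ ≤ 2 * ‖z‖ ^ 2 := by
  rcases eq_or_ne z 0 with rfl | hz0
  · simp [S.f_zero hn]
  have hz0' : (0:ℝ) < ‖z‖ := norm_pos_iff.mpr hz0
  rcases eq_or_lt_of_le hz with heq | hlt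
  case inl =>
    -- ‖z‖ = 1 : trivial bound
    have h1 := (S.hbound n hn z hz).2
    have h2 := S.lam_norm_le hn z
    calc ‖f n z - S.lam n z‖ ≤ ‖f n z‖ + ‖S.lam n z‖ := norm_sub_le _ _
      _ ≤ b * ‖z‖ + b * ‖z‖ := add_le_add h1 h2
      _ ≤ 2 * ‖z‖ ^ 2 := by nlinarith [S.hb0.le, S.hb1.le]
  case inr =>
    have hvC : (‖z‖ : ℂ) ≠ 0 := by simpa using hz0'.ne'
    set u : Ek k := (‖z‖ : ℂ)⁻¹ • z with hu
    have hun : ‖u‖ = 1 := by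
      rw [hu, norm_smul, norm_inv, Complex.norm_real, Real.norm_eq_abs, abs_of_pos hz0']
      field_simp
    set Λu : Ek k := S.lam n u with hΛu
    set φ : ℂ → Ek k := fun l => f n (l • u) - l • Λu with hφ
    have haff : ∀ l : ℂ, HasDerivAt (fun l : ℂ => l • u) u l := by
      intro l; simpa using (hasDerivAt_id l).smul_const u
    have hφd : Differentiable ℂ φ := by
      apply Differentiable.sub
      · exact fun l =>
          ((S.f_diff hn _).hasFDerivAt.comp_hasDerivAt l (haff l)).differentiableAt
      · exact fun l => ((hasDerivAt_id l).smul_const Λu).differentiableAt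
    have hφ0 : φ 0 = 0 := by rw [hφ]; simp [S.f_zero hn]
    have hφ1 : deriv φ 0 = 0 := by
      have h1 : HasDerivAt (fun l : ℂ => f n (l • u)) (fderiv ℂ (f n) 0 u) 0 := by
        have h0 : (0:ℂ) • u = 0 := by simp
        have := (S.f_diff hn ((0:ℂ) • u)).hasFDerivAt.comp_hasDerivAt (0:ℂ) (haff 0)
        rwa [h0] at this
      have h2 : HasDerivAt (fun l : ℂ => l • Λu) Λu 0 := by
        simpa using (hasDerivAt_id (0:ℂ)).smul_const Λu
      have := h1.sub h2
      rw [show fderiv ℂ (f n) 0 u = Λu from (S.lam_apply hn u).symm] at this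
      rw [sub_self] at this
      exact this.deriv
    have hφb : ∀ l : ℂ, l ∈ ball (0:ℂ) 1 → ‖φ l‖ ≤ 2 := by
      intro l hl
      have hl1 : ‖l‖ ≤ 1 := le_of_lt (by simpa [mem_ball, dist_eq_norm] using hl)
      have hlu : ‖l • u‖ ≤ 1 := by rw [norm_smul, hun, mul_one]; exact hl1
      have b1 : ‖f n (l • u)‖ ≤ b := by
        calc ‖f n (l • u)‖ ≤ b * ‖l • u‖ := (S.hbound n hn _ hlu).2
          _ ≤ b * 1 := mul_le_mul_of_nonneg_left hlu S.hb0.le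
          _ = b := by ring
      have b2 : ‖l • Λu‖ ≤ b := by
        rw [norm_smul]
        have : ‖Λu‖ ≤ b := by
          have := S.lam_norm_le hn u
          rwa [hun, mul_one] at this
        calc ‖l‖ * ‖Λu‖ ≤ 1 * b := mul_le_mul hl1 this (norm_nonneg _) zero_le_one
          _ = b := by ring
      calc ‖φ l‖ ≤ ‖f n (l • u)‖ + ‖l • Λu‖ := norm_sub_le _ _
        _ ≤ b + b := add_le_add b1 b2
        _ ≤ 2 := by linarith [S.hb1.le]
    have hll : ((‖z‖:ℝ) : ℂ) ∈ ball (0:ℂ) 1 := by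
      rw [mem_ball, dist_eq_norm, sub_zero, Complex.norm_real, Real.norm_eq_abs,
        abs_of_pos hz0']
      exact hlt
    have := sq_schwarz hφd hφ0 hφ1 (by norm_num : (0:ℝ) ≤ 2) hφb hll
    have h1 : ((‖z‖:ℝ):ℂ) • u = z := by
      rw [hu, smul_smul, mul_inv_cancel₀ hvC, one_smul]
    have h2 : ((‖z‖:ℝ):ℂ) • Λu = S.lam n z := by
      rw [hΛu, ← map_smul, h1]
    have hsub : φ ((‖z‖:ℝ) : ℂ) = f n z - S.lam n z := by
      show f n (((‖z‖:ℝ):ℂ) • u) - ((‖z‖:ℝ):ℂ) • Λu = f n z - S.lam n z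
      rw [h1, h2]
    rw [hsub] at this
    have hnn : ‖((‖z‖:ℝ):ℂ)‖ = ‖z‖ := by
      rw [Complex.norm_real, Real.norm_eq_abs, abs_of_pos hz0']
    rwa [hnn] at this

lemma lam_norm_ge (S : Squeeze k f a b) {n : ℕ} (hn : 1 ≤ n) (v : Ek k) : a * ‖v‖ ≤ ‖S.lam n v‖ := by
  rcases eq_or_ne v 0 with rfl | hv
  · simp
  have hv0 : (0:ℝ) < ‖v‖ := norm_pos_iff.mpr hv
  refine le_of_forall_pos_le_add ?_
  intro ε hε
  set t : ℝ := min (ε / (2 * ‖v‖ ^ 2)) (1 / ‖v‖) with ht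
  have ht0 : 0 < t := by
    apply lt_min <;> positivity
  have htv : ‖t • v‖ ≤ 1 := by
    rw [norm_smul, Real.norm_eq_abs, abs_of_pos ht0]
    calc t * ‖v‖ ≤ (1 / ‖v‖) * ‖v‖ :=
          mul_le_mul_of_nonneg_right (min_le_right _ _) hv0.le
      _ = 1 := by field_simp
  have h1 := (S.hbound n hn _ htv).1
  have h2 := S.quad hn htv
  have h3 : ‖f n (t • v)‖ ≤ ‖S.lam n (t • v)‖ + 2 * ‖t • v‖ ^ 2 := by
    calc ‖f n (t • v)‖ = ‖S.lam n (t • v) + (f n (t • v) - S.lam n (t • v))‖ := by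
          congr 1
          abel
      _ ≤ ‖S.lam n (t • v)‖ + ‖f n (t • v) - S.lam n (t • v)‖ := norm_add_le _ _
      _ ≤ ‖S.lam n (t • v)‖ + 2 * ‖t • v‖ ^ 2 := by linarith
  have hsm : ‖S.lam n (t • v)‖ = t * ‖S.lam n v‖ := by
    have heq : S.lam n (t • v) = t • S.lam n v := by
      rw [← Complex.coe_smul, map_smul, Complex.coe_smul]
    rw [heq, norm_smul, Real.norm_eq_abs, abs_of_pos ht0]
  have hnv : ‖t • v‖ = t * ‖v‖ := by
    rw [norm_smul, Real.norm_eq_abs, abs_of_pos ht0]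
  rw [hnv] at h1 h3
  rw [hsm] at h3
  have hq : a * (t * ‖v‖) ≤ t * ‖S.lam n v‖ + 2 * (t * ‖v‖) ^ 2 := le_trans h1 h3
  have ht2 : 2 * t * ‖v‖ ^ 2 ≤ ε := by
    have : t ≤ ε / (2 * ‖v‖ ^ 2) := min_le_left _ _
    rw [le_div_iff₀ (by positivity)] at this
    nlinarith
  -- divide by t
  have := mul_le_mul_of_nonneg_left hq (le_of_lt (inv_pos.mpr ht0))
  rw [mul_add] at this
  have e1 : t⁻¹ * (a * (t * ‖v‖)) = a * ‖v‖ := by field_simp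
  have e2 : t⁻¹ * (t * ‖S.lam n v‖) = ‖S.lam n v‖ := by field_simp
  have e3 : t⁻¹ * (2 * (t * ‖v‖) ^ 2) = 2 * t * ‖v‖ ^ 2 := by field_simp
  rw [e1, e2, e3] at this
  linarith

lemma lam_symm_norm_le (S : Squeeze k f a b) {n : ℕ} (hn : 1 ≤ n) (w : Ek k) :
    ‖(S.lam n).symm w‖ ≤ a⁻¹ * ‖w‖ := by
  have := S.lam_norm_ge hn ((S.lam n).symm w)
  rw [(S.lam n).apply_symm_apply] at this
  rw [inv_mul_eq_div, le_div_iff₀ S.ha]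
  linarith

/-- Product of the linearizations `lam (m+n) ∘ ⋯ ∘ lam (m+1)`. -/
def P (S : Squeeze k f a b) (m : ℕ) : ℕ → (Ek k ≃L[ℂ] Ek k)
  | 0 => ContinuousLinearEquiv.refl ℂ (Ek k)
  | n + 1 => (P S m n).trans (S.lam (m + n + 1))

lemma P_apply_succ (S : Squeeze k f a b) (m n : ℕ) (z : Ek k) : S.P m (n+1) z = S.lam (m+n+1) (S.P m n z) := rfl

lemma P_symm_succ (S : Squeeze k f a b) (m n : ℕ) (w : Ek k) :
    (S.P m (n+1)).symm w = (S.P m n).symm ((S.lam (m+n+1)).symm w) := rfl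

lemma P_symm_shift (S : Squeeze k f a b) (m n : ℕ) (x : Ek k) :
    (S.P m n).symm x = (S.P m (n+1)).symm (S.lam (m+n+1) x) := by
  rw [P_symm_succ, (S.lam (m+n+1)).symm_apply_apply]

lemma P_norm_le (S : Squeeze k f a b) (m n : ℕ) (z : Ek k) : ‖S.P m n z‖ ≤ b ^ n * ‖z‖ := by
  induction n with
  | zero => simp [P]
  | succ n ih =>
      rw [P_apply_succ]
      calc ‖S.lam (m+n+1) (S.P m n z)‖ ≤ b * ‖S.P m n z‖ := S.lam_norm_le (by omega) _
        _ ≤ b * (b ^ n * ‖z‖) := mul_le_mul_of_nonneg_left ih S.hb0.le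
        _ = b ^ (n+1) * ‖z‖ := by ring

lemma P_symm_norm_le (S : Squeeze k f a b) (m n : ℕ) (w : Ek k) : ‖(S.P m n).symm w‖ ≤ (a⁻¹) ^ n * ‖w‖ := by
  induction n generalizing w with
  | zero => simp [P]
  | succ n ih =>
      rw [P_symm_succ]
      have h1 := S.lam_symm_norm_le (n := m+n+1) (by omega) w
      have ha0 : (0:ℝ) < a⁻¹ := inv_pos.mpr S.ha
      calc ‖(S.P m n).symm ((S.lam (m+n+1)).symm w)‖
          ≤ (a⁻¹) ^ n * ‖(S.lam (m+n+1)).symm w‖ := ih _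
        _ ≤ (a⁻¹) ^ n * (a⁻¹ * ‖w‖) := by
            exact mul_le_mul_of_nonneg_left h1 (by positivity)
        _ = (a⁻¹) ^ (n+1) * ‖w‖ := by ring

lemma P_split (S : Squeeze k f a b) (m n : ℕ) (z : Ek k) : S.P 0 (m+n) z = S.P m n (S.P 0 m z) := by
  induction n with
  | zero => rfl
  | succ n ih =>
      have hidx : 0 + (m + n) + 1 = m + n + 1 := by omega
      calc S.P 0 (m + (n+1)) z = S.lam (0+(m+n)+1) (S.P 0 (m+n) z) := S.P_apply_succ 0 (m+n) z
        _ = S.lam (m+n+1) (S.P m n (S.P 0 m z)) := by rw [hidx, ih]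
        _ = S.P m (n+1) (S.P 0 m z) := (S.P_apply_succ m n _).symm

lemma P_split_symm (S : Squeeze k f a b) (m n : ℕ) (w : Ek k) :
    (S.P 0 (m+n)).symm w = (S.P 0 m).symm ((S.P m n).symm w) := by
  apply (S.P 0 (m+n)).injective
  rw [(S.P 0 (m+n)).apply_symm_apply, P_split, (S.P 0 m).apply_symm_apply,
    (S.P m n).apply_symm_apply]

end Squeeze


namespace Squeeze

variable {k : ℕ} {f : ℕ → Ek k → Ek k} {a b : ℝ}

lemma ball_in_unit {x₀ y : Ek k} (hx₀ : x₀ ∈ ball (0:Ek k) 1)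
    (hy : y ∈ ball x₀ ((1 - ‖x₀‖)/2)) : y ∈ ball (0:Ek k) 1 := by
  rw [mem_ball_zero_iff]
  rw [mem_ball, dist_eq_norm] at hy
  rw [mem_ball_zero_iff] at hx₀
  calc ‖y‖ = ‖(y - x₀) + x₀‖ := by congr 1; abel
    _ ≤ ‖y - x₀‖ + ‖x₀‖ := norm_add_le _ _
    _ < (1 - ‖x₀‖)/2 + ‖x₀‖ := by linarith
    _ ≤ 1 := by linarith

/-- Approximations `P⁻¹ ∘ T` to the limit map. -/
def appr (S : Squeeze k f a b) (m n : ℕ) (z : Ek k) : Ek k := (S.P m n).symm (Tcomp f m n z)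

lemma appr_zero_n (S : Squeeze k f a b) (m : ℕ) (z : Ek k) : S.appr m 0 z = z := rfl

lemma appr_diff (S : Squeeze k f a b) (m n : ℕ) : Differentiable ℂ (S.appr m n) :=
  (((S.P m n).symm : Ek k →L[ℂ] Ek k).differentiable).comp (S.Tcomp_diff m n)

lemma hq0 (S : Squeeze k f a b) : 0 ≤ b^2 * a⁻¹ := by
  have := S.ha; have := S.hb0; positivity

lemma hq1 (S : Squeeze k f a b) : b^2 * a⁻¹ < 1 := by
  rw [← div_eq_mul_inv, div_lt_one S.ha]; exact S.hba

lemma h1q (S : Squeeze k f a b) : 0 < 1 - b^2 * a⁻¹ := by linarith [S.hq1]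

/-- The constant `K = 2a⁻¹/(1-q)`. -/
def KK (S : Squeeze k f a b) : ℝ := (2 * a⁻¹) / (1 - b^2 * a⁻¹)

lemma KK_pos (S : Squeeze k f a b) : 0 < S.KK := by
  have h1 := S.h1q; have := S.ha
  unfold KK
  positivity

lemma appr_step (S : Squeeze k f a b) (m n : ℕ) {z : Ek k} (hz : ‖z‖ ≤ 1) :
    ‖S.appr m (n+1) z - S.appr m n z‖ ≤ (2 * a⁻¹ * ‖z‖^2) * (b^2*a⁻¹)^n := by
  have hy1 : ‖Tcomp f m n z‖ ≤ 1 := by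
    refine le_trans (S.Tcomp_norm_le m n hz) ?_
    calc b ^ n * ‖z‖ ≤ 1 * 1 :=
          mul_le_mul (pow_le_one₀ S.hb0.le S.hb1.le) hz (norm_nonneg _) zero_le_one
      _ = 1 := by ring
  have e1 : S.appr m (n+1) z = (S.P m (n+1)).symm (f (m+n+1) (Tcomp f m n z)) := rfl
  have e2 : S.appr m n z = (S.P m (n+1)).symm (S.lam (m+n+1) (Tcomp f m n z)) := by
    unfold appr
    rw [S.P_symm_shift]
  have e3 : S.appr m (n+1) z - S.appr m n z
      = (S.P m (n+1)).symm (f (m+n+1) (Tcomp f m n z) - S.lam (m+n+1) (Tcomp f m n z)) := by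
    rw [e1, e2, ← map_sub]
  rw [e3]
  have h4 := S.P_symm_norm_le m (n+1) (f (m+n+1) (Tcomp f m n z) - S.lam (m+n+1) (Tcomp f m n z))
  have h5 := S.quad (n := m+n+1) (by omega) hy1
  have h6 := S.Tcomp_norm_le m n hz
  have ha1 : (0:ℝ) < a⁻¹ := inv_pos.mpr S.ha
  calc ‖(S.P m (n+1)).symm (f (m+n+1) (Tcomp f m n z) - S.lam (m+n+1) (Tcomp f m n z))‖
      ≤ (a⁻¹)^(n+1) * ‖f (m+n+1) (Tcomp f m n z) - S.lam (m+n+1) (Tcomp f m n z)‖ := h4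
    _ ≤ (a⁻¹)^(n+1) * (2 * ‖Tcomp f m n z‖^2) := by
        exact mul_le_mul_of_nonneg_left h5 (pow_nonneg ha1.le _)
    _ ≤ (a⁻¹)^(n+1) * (2 * (b^n * ‖z‖)^2) := by
        apply mul_le_mul_of_nonneg_left _ (pow_nonneg ha1.le _)
        have : ‖Tcomp f m n z‖^2 ≤ (b^n * ‖z‖)^2 := by
          apply pow_le_pow_left₀ (norm_nonneg _) h6
        linarith
    _ = (2 * a⁻¹ * ‖z‖^2) * (b^2*a⁻¹)^n := by ring

lemma appr_cauchy (S : Squeeze k f a b) (m : ℕ) {z : Ek k} (hz : ‖z‖ ≤ 1) :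
    CauchySeq (fun n => S.appr m n z) := by
  apply cauchySeq_of_le_geometric (b^2*a⁻¹) (2 * a⁻¹ * ‖z‖^2) S.hq1
  intro n
  rw [dist_eq_norm, norm_sub_rev]
  exact S.appr_step m n hz

/-- The limiting map (Rosay–Rudin style conjugacy). -/
def Hfun (S : Squeeze k f a b) (m : ℕ) (z : Ek k) : Ek k :=
  limUnder atTop (fun n => S.appr m n z)

lemma appr_tendsto (S : Squeeze k f a b) (m : ℕ) {z : Ek k} (hz : ‖z‖ ≤ 1) :
    Tendsto (fun n => S.appr m n z) atTop (𝓝 (S.Hfun m z)) :=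
  (S.appr_cauchy m hz).tendsto_limUnder

lemma Hfun_dist (S : Squeeze k f a b) (m : ℕ) {z : Ek k} (hz : ‖z‖ ≤ 1) (n : ℕ) :
    ‖S.Hfun m z - S.appr m n z‖ ≤ (S.KK * ‖z‖^2) * (b^2*a⁻¹)^n := by
  have := dist_le_of_le_geometric_of_tendsto (b^2*a⁻¹) (2 * a⁻¹ * ‖z‖^2) S.hq1
    (fun n => by rw [dist_eq_norm, norm_sub_rev]; exact S.appr_step m n hz)
    (S.appr_tendsto m hz) n
  rw [dist_eq_norm, norm_sub_rev] at this
  refine le_trans this (le_of_eq ?_)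
  unfold KK
  have h1q := S.h1q
  field_simp

lemma Hfun_sub_self (S : Squeeze k f a b) (m : ℕ) {z : Ek k} (hz : ‖z‖ ≤ 1) :
    ‖S.Hfun m z - z‖ ≤ S.KK * ‖z‖^2 := by
  have := S.Hfun_dist m hz 0
  rw [appr_zero_n] at this
  simpa using this

lemma Hfun_zero (S : Squeeze k f a b) (m : ℕ) : S.Hfun m 0 = 0 := by
  have := S.Hfun_sub_self m (z := 0) (by simp)
  simp only [norm_zero] at this
  have : ‖S.Hfun m 0 - 0‖ ≤ 0 := by simpa using this
  simpa [sub_eq_zero] using norm_le_zero_iff.mp this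

/-- Derivatives of the approximations. -/
def appr' (S : Squeeze k f a b) (m n : ℕ) (x : Ek k) : Ek k →L[ℂ] Ek k :=
  ((S.P m n).symm : Ek k →L[ℂ] Ek k).comp (fderiv ℂ (Tcomp f m n) x)

lemma appr_hasFDerivAt (S : Squeeze k f a b) (m n : ℕ) (x : Ek k) :
    HasFDerivAt (S.appr m n) (S.appr' m n x) x :=
  ((S.P m n).symm.hasFDerivAt).comp x (S.Tcomp_diff m n x).hasFDerivAt

lemma appr'_continuous (S : Squeeze k f a b) (m n : ℕ) : Continuous (S.appr' m n) :=
  ((ContinuousLinearMap.compL ℂ (Ek k) (Ek k) (Ek k))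
    ((S.P m n).symm : Ek k →L[ℂ] Ek k)).continuous.comp
      (entire_fderiv_continuous (S.Tcomp_diff m n))

lemma appr'_sub_bound (S : Squeeze k f a b) (m : ℕ) {x₀ : Ek k} (hx₀ : x₀ ∈ ball (0:Ek k) 1)
    {n n' : ℕ} (hnn' : n ≤ n') {y : Ek k} (hy : y ∈ ball x₀ ((1 - ‖x₀‖)/2)) :
    ‖S.appr' m n' y - S.appr' m n y‖ ≤ (4 * S.KK / ((1 - ‖x₀‖)/2)) * (b^2*a⁻¹)^n := by
  set ρ := (1 - ‖x₀‖)/2 with hρdef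
  have hx1 : ‖x₀‖ < 1 := mem_ball_zero_iff.mp hx₀
  have hρ : 0 < ρ := by rw [hρdef]; linarith
  have hmem : ∀ w ∈ ball y ρ, ‖w‖ ≤ 1 := by
    intro w hw
    rw [mem_ball, dist_eq_norm] at hw hy
    calc ‖w‖ = ‖(w - y) + (y - x₀) + x₀‖ := by congr 1; abel
      _ ≤ ‖(w - y) + (y - x₀)‖ + ‖x₀‖ := norm_add_le _ _
      _ ≤ ‖w - y‖ + ‖y - x₀‖ + ‖x₀‖ := by linarith [norm_add_le (w-y) (y-x₀)]
      _ ≤ ρ + ρ + ‖x₀‖ := by linarith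
      _ ≤ 1 := by rw [hρdef]; linarith
  have hub : ∀ w ∈ ball y ρ, ‖S.appr m n' w - S.appr m n w‖ ≤ 2*S.KK*(b^2*a⁻¹)^n := by
    intro w hw
    have hw1 := hmem w hw
    have d1 := S.Hfun_dist m hw1 n'
    have d2 := S.Hfun_dist m hw1 n
    have hwsq : ‖w‖^2 ≤ 1 := by nlinarith [norm_nonneg w]
    have hKK := S.KK_pos
    have hqmono : (b^2*a⁻¹)^n' ≤ (b^2*a⁻¹)^n :=
      pow_le_pow_of_le_one S.hq0 S.hq1.le hnn'
    have hd1 : ‖S.Hfun m w - S.appr m n' w‖ ≤ S.KK * (b^2*a⁻¹)^n := by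
      refine le_trans d1 ?_
      calc S.KK * ‖w‖^2 * (b^2*a⁻¹)^n' ≤ S.KK * 1 * (b^2*a⁻¹)^n :=  by
            apply mul_le_mul _ hqmono (pow_nonneg S.hq0 n')
              (mul_nonneg S.KK_pos.le zero_le_one)
            nlinarith
        _ = S.KK * (b^2*a⁻¹)^n := by ring
    have hd2 : ‖S.Hfun m w - S.appr m n w‖ ≤ S.KK * (b^2*a⁻¹)^n := by
      refine le_trans d2 ?_
      calc S.KK * ‖w‖^2 * (b^2*a⁻¹)^n ≤ S.KK * 1 * (b^2*a⁻¹)^n := by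
            apply mul_le_mul_of_nonneg_right _ (pow_nonneg S.hq0 n)
            nlinarith
        _ = S.KK * (b^2*a⁻¹)^n := by ring
    calc ‖S.appr m n' w - S.appr m n w‖
        = ‖(S.appr m n' w - S.Hfun m w) + (S.Hfun m w - S.appr m n w)‖ := by congr 1; abel
      _ ≤ ‖S.appr m n' w - S.Hfun m w‖ + ‖S.Hfun m w - S.appr m n w‖ := norm_add_le _ _
      _ ≤ S.KK * (b^2*a⁻¹)^n + S.KK * (b^2*a⁻¹)^n := by
          rw [norm_sub_rev]
          exact add_le_add hd1 hd2
      _ = 2*S.KK*(b^2*a⁻¹)^n := by ring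
  have := cauchy_deriv_bound hρ
    (fun w hw => (S.appr_hasFDerivAt m n' w).sub (S.appr_hasFDerivAt m n w)) hub
  refine le_trans this (le_of_eq ?_)
  field_simp
  ring

lemma mem_self_ball (x : Ek k) {r : ℝ} (hr : 0 < r) : x ∈ ball x r := mem_ball_self hr

lemma appr'_cauchy (S : Squeeze k f a b) (m : ℕ) {x : Ek k} (hx : x ∈ ball (0:Ek k) 1) :
    CauchySeq (fun n => S.appr' m n x) := by
  have hx1 : ‖x‖ < 1 := mem_ball_zero_iff.mp hx
  have hρ : 0 < (1 - ‖x‖)/2 := by linarith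
  apply cauchySeq_of_le_geometric (b^2*a⁻¹) (4 * S.KK / ((1 - ‖x‖)/2)) S.hq1
  intro n
  rw [dist_eq_norm, norm_sub_rev]
  exact S.appr'_sub_bound m hx (Nat.le_succ n) (mem_ball_self hρ)

/-- The derivative of the limit map. -/
def g' (S : Squeeze k f a b) (m : ℕ) (x : Ek k) : Ek k →L[ℂ] Ek k :=
  limUnder atTop (fun n => S.appr' m n x)

lemma appr'_tendsto (S : Squeeze k f a b) (m : ℕ) {x : Ek k} (hx : x ∈ ball (0:Ek k) 1) :
    Tendsto (fun n => S.appr' m n x) atTop (𝓝 (S.g' m x)) :=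
  (S.appr'_cauchy m hx).tendsto_limUnder

lemma g'_dist (S : Squeeze k f a b) (m : ℕ) {x₀ : Ek k} (hx₀ : x₀ ∈ ball (0:Ek k) 1) (n : ℕ)
    {y : Ek k} (hy : y ∈ ball x₀ ((1 - ‖x₀‖)/2)) :
    ‖S.g' m y - S.appr' m n y‖ ≤ (4 * S.KK / ((1 - ‖x₀‖)/2)) * (b^2*a⁻¹)^n := by
  have hy1 : y ∈ ball (0:Ek k) 1 := ball_in_unit hx₀ hy
  have ht : Tendsto (fun n' => ‖S.appr' m n' y - S.appr' m n y‖) atTop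
      (𝓝 ‖S.g' m y - S.appr' m n y‖) :=
    (((S.appr'_tendsto m hy1).sub tendsto_const_nhds).norm)
  refine le_of_tendsto ht ?_
  filter_upwards [eventually_ge_atTop n] with n' hn'
  exact S.appr'_sub_bound m hx₀ hn' hy

lemma appr'_tlu (S : Squeeze k f a b) (m : ℕ) :
    TendstoLocallyUniformlyOn (S.appr' m) (S.g' m) atTop (ball (0:Ek k) 1) := by
  intro u hu x hx
  have hx1 : ‖x‖ < 1 := mem_ball_zero_iff.mp hx
  have hρ : 0 < (1 - ‖x‖)/2 := by linarith
  refine ⟨ball x ((1 - ‖x‖)/2),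
    mem_nhdsWithin_of_mem_nhds (ball_mem_nhds _ hρ), ?_⟩
  obtain ⟨ε, hε, hεu⟩ := mem_uniformity_dist.mp hu
  have htend : Tendsto (fun n => (4 * S.KK / ((1 - ‖x‖)/2)) * (b^2*a⁻¹)^n) atTop (𝓝 0) := by
    have := (tendsto_pow_atTop_nhds_zero_of_lt_one S.hq0 S.hq1).const_mul
      (4 * S.KK / ((1 - ‖x‖)/2))
    simpa using this
  filter_upwards [htend.eventually (gt_mem_nhds hε)] with n hn y hy
  apply hεu
  rw [dist_eq_norm]
  exact lt_of_le_of_lt (S.g'_dist m hx n hy) hn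

lemma Hfun_hasFDerivAt (S : Squeeze k f a b) (m : ℕ) {x : Ek k} (hx : x ∈ ball (0:Ek k) 1) :
    HasFDerivAt (S.Hfun m) (S.g' m x) x :=
  hasFDerivAt_of_tendstoLocallyUniformlyOn isOpen_ball (S.appr'_tlu m)
    (fun n x _ => S.appr_hasFDerivAt m n x)
    (fun x hx => S.appr_tendsto m (le_of_lt (mem_ball_zero_iff.mp hx))) hx

lemma g'_continuousOn (S : Squeeze k f a b) (m : ℕ) :
    ContinuousOn (S.g' m) (ball (0:Ek k) 1) :=
  (S.appr'_tlu m).continuousOn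
    (Eventually.of_forall fun n => (S.appr'_continuous m n).continuousOn).frequently

lemma appr_split (S : Squeeze k f a b) (m n : ℕ) (z : Ek k) :
    S.appr 0 (m+n) z = (S.P 0 m).symm (S.appr m n (Tcomp f 0 m z)) := by
  unfold appr
  rw [Tcomp_add, S.P_split_symm]

lemma Hfun_tendsto_glob (S : Squeeze k f a b) (m : ℕ) {z : Ek k}
    (hz : ‖Tcomp f 0 m z‖ ≤ 1) :
    Tendsto (fun n => S.appr 0 n z) atTop
      (𝓝 ((S.P 0 m).symm (S.Hfun m (Tcomp f 0 m z)))) := by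
  have inner := S.appr_tendsto m hz
  have comp := (((S.P 0 m).symm).continuous.tendsto _).comp inner
  have heq : ((S.P 0 m).symm ∘ fun n => S.appr m n (Tcomp f 0 m z))
      = fun n => S.appr 0 (m+n) z := funext fun n => (S.appr_split m n z).symm
  rw [heq] at comp
  have heq2 : (fun n => S.appr 0 (m + n) z) = fun n => S.appr 0 (n + m) z :=
    funext fun n => by rw [add_comm]
  rw [heq2] at comp
  exact (tendsto_add_atTop_iff_nat m).mp comp

lemma Hfun_glob_eq (S : Squeeze k f a b) (m : ℕ) {z : Ek k}
    (hz : ‖Tcomp f 0 m z‖ ≤ 1) :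
    S.Hfun 0 z = (S.P 0 m).symm (S.Hfun m (Tcomp f 0 m z)) :=
  (S.Hfun_tendsto_glob m hz).limUnder_eq

end Squeeze

/-- The basin of attraction. -/
def basinSet {k : ℕ} (f : ℕ → Ek k → Ek k) : Set (Ek k) :=
  {z | Tendsto (fun n => Tcomp f 0 n z) atTop (𝓝 0)}

namespace Squeeze

variable {k : ℕ} {f : ℕ → Ek k → Ek k} {a b : ℝ}

/-- The radius of the good small ball. -/
def s0 (S : Squeeze k f a b) : ℝ := min (1/4) (1/(32*S.KK))

lemma s0_pos (S : Squeeze k f a b) : 0 < S.s0 := by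
  have := S.KK_pos
  apply lt_min (by norm_num) (by positivity)

lemma s0_le_quarter (S : Squeeze k f a b) : S.s0 ≤ 1/4 := min_le_left _ _

lemma s0_lt_one (S : Squeeze k f a b) : S.s0 < 1 := lt_of_le_of_lt S.s0_le_quarter (by norm_num)

lemma s0K (S : Squeeze k f a b) : 8 * S.KK * S.s0 ≤ 1/4 := by
  have h1 : S.s0 ≤ 1/(32*S.KK) := min_le_right _ _
  have h2 := S.KK_pos
  rw [le_div_iff₀ (by positivity)] at h1
  nlinarith

lemma KKs0 (S : Squeeze k f a b) : S.KK * S.s0 ≤ 1/32 := by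
  have := S.s0K; have := S.KK_pos; have := S.s0_pos
  nlinarith

lemma g'_near_id (S : Squeeze k f a b) (m : ℕ) {x : Ek k} (hx : ‖x‖ ≤ S.s0) :
    ‖S.g' m x - ContinuousLinearMap.id ℂ (Ek k)‖ ≤ 1/4 := by
  have hs0 := S.s0_pos
  have hs4 := S.s0_le_quarter
  have hKK := S.KK_pos
  have hsub : ∀ y ∈ ball x S.s0, y ∈ ball (0:Ek k) 1 := by
    intro y hy
    rw [mem_ball, dist_eq_norm] at hy
    rw [mem_ball_zero_iff]
    calc ‖y‖ = ‖(y - x) + x‖ := by congr 1; abel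
      _ ≤ ‖y - x‖ + ‖x‖ := norm_add_le _ _
      _ < S.s0 + S.s0 := by linarith
      _ < 1 := by linarith
  have hu : ∀ y ∈ ball x S.s0,
      HasFDerivAt (fun w => S.Hfun m w - w)
        (S.g' m y - ContinuousLinearMap.id ℂ (Ek k)) y := fun y hy =>
    (S.Hfun_hasFDerivAt m (hsub y hy)).sub (hasFDerivAt_id y)
  have hM : ∀ y ∈ ball x S.s0, ‖S.Hfun m y - y‖ ≤ 4 * S.KK * S.s0^2 := by
    intro y hy
    have hy1 : ‖y‖ ≤ 1 := le_of_lt (mem_ball_zero_iff.mp (hsub y hy))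
    have hy2 : ‖y‖ ≤ 2 * S.s0 := by
      rw [mem_ball, dist_eq_norm] at hy
      calc ‖y‖ = ‖(y - x) + x‖ := by congr 1; abel
        _ ≤ ‖y - x‖ + ‖x‖ := norm_add_le _ _
        _ ≤ 2 * S.s0 := by linarith
    have := S.Hfun_sub_self m hy1
    refine le_trans this ?_
    have : ‖y‖^2 ≤ (2*S.s0)^2 := by nlinarith [norm_nonneg y]
    nlinarith
  have := cauchy_deriv_bound S.s0_pos hu hM
  refine le_trans this ?_
  have h8 := S.s0K
  rw [div_le_iff₀ hs0] at *
  nlinarith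

lemma Hfun_lip (S : Squeeze k f a b) (m : ℕ) {z w : Ek k}
    (hz : ‖z‖ ≤ S.s0) (hw : ‖w‖ ≤ S.s0) :
    ‖(S.Hfun m z - z) - (S.Hfun m w - w)‖ ≤ (1/4) * ‖z - w‖ := by
  have hball : ∀ y : Ek k, y ∈ closedBall (0:Ek k) S.s0 → y ∈ ball (0:Ek k) 1 := by
    intro y hy
    rw [mem_closedBall_zero_iff] at hy
    rw [mem_ball_zero_iff]
    exact lt_of_le_of_lt hy S.s0_lt_one
  have hf : ∀ y ∈ closedBall (0:Ek k) S.s0,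
      HasFDerivWithinAt (fun w => S.Hfun m w - w)
        ((S.g' m y - ContinuousLinearMap.id ℂ (Ek k)).restrictScalars ℝ)
        (closedBall (0:Ek k) S.s0) y := by
    intro y hy
    exact (((S.Hfun_hasFDerivAt m (hball y hy)).sub
      (hasFDerivAt_id y)).restrictScalars ℝ).hasFDerivWithinAt
  have hbound : ∀ y ∈ closedBall (0:Ek k) S.s0,
      ‖(S.g' m y - ContinuousLinearMap.id ℂ (Ek k)).restrictScalars ℝ‖ ≤ 1/4 := by
    intro y hy
    rw [ContinuousLinearMap.norm_restrictScalars]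
    exact S.g'_near_id m (mem_closedBall_zero_iff.mp hy)
  have := (convex_closedBall (0:Ek k) S.s0).norm_image_sub_le_of_norm_hasFDerivWithin_le
    hf hbound (mem_closedBall_zero_iff.mpr hw) (mem_closedBall_zero_iff.mpr hz)
  simpa using this

lemma Hfun_inj_s0 (S : Squeeze k f a b) (m : ℕ) {z w : Ek k}
    (hz : ‖z‖ ≤ S.s0) (hw : ‖w‖ ≤ S.s0) (h : S.Hfun m z = S.Hfun m w) : z = w := by
  have hl := S.Hfun_lip m hz hw
  have he : (S.Hfun m z - z) - (S.Hfun m w - w) = w - z := by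
    rw [h]; abel
  rw [he] at hl
  rw [norm_sub_rev z w] at hl
  have : ‖w - z‖ ≤ 0 := by linarith
  have := norm_le_zero_iff.mp this
  have : w = z := by rwa [sub_eq_zero] at this
  exact this.symm

lemma Hfun_surj_s0 (S : Squeeze k f a b) (m : ℕ) {ζ : Ek k} (hζ : ‖ζ‖ ≤ S.s0/2) :
    ∃ y : Ek k, ‖y‖ ≤ S.s0 ∧ S.Hfun m y = ζ := by
  have hs0 := S.s0_pos
  have hKs := S.KKs0
  have hKK := S.KK_pos
  set A : Set (Ek k) := closedBall (0:Ek k) S.s0 with hA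
  haveI : Nonempty A := ⟨⟨0, mem_closedBall_self hs0.le⟩⟩
  haveI : CompleteSpace A :=
    (isClosed_closedBall (x := (0:Ek k)) (ε := S.s0)).completeSpace_coe
  have hmaps : ∀ y : ↥A, ζ - (S.Hfun m y.1 - y.1) ∈ A := by
    intro y
    have hy : ‖y.1‖ ≤ S.s0 := mem_closedBall_zero_iff.mp y.2
    show ζ - (S.Hfun m y.1 - y.1) ∈ closedBall (0:Ek k) S.s0
    rw [mem_closedBall_zero_iff]
    have h1 : ‖y.1‖ ≤ 1 := le_of_lt (lt_of_le_of_lt hy S.s0_lt_one)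
    have h2 := S.Hfun_sub_self m h1
    have h3 : ‖y.1‖^2 ≤ S.s0 * S.s0 := by nlinarith [norm_nonneg y.1]
    have h4 : S.KK * ‖y.1‖^2 ≤ S.s0/4 := by nlinarith
    calc ‖ζ - (S.Hfun m y.1 - y.1)‖ ≤ ‖ζ‖ + ‖S.Hfun m y.1 - y.1‖ := norm_sub_le _ _
      _ ≤ S.s0/2 + S.s0/4 := by linarith
      _ ≤ S.s0 := by linarith
  set Tmap : ↥A → ↥A := fun y => ⟨ζ - (S.Hfun m y.1 - y.1), hmaps y⟩ with hT
  have hlip : LipschitzWith (1/4 : ℝ≥0) Tmap := by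
    apply LipschitzWith.of_dist_le_mul
    intro y y'
    have hy : ‖y.1‖ ≤ S.s0 := mem_closedBall_zero_iff.mp y.2
    have hy' : ‖y'.1‖ ≤ S.s0 := mem_closedBall_zero_iff.mp y'.2
    rw [Subtype.dist_eq]
    show dist (ζ - (S.Hfun m y.1 - y.1)) (ζ - (S.Hfun m y'.1 - y'.1)) ≤ _
    rw [dist_eq_norm]
    have he : ζ - (S.Hfun m y.1 - y.1) - (ζ - (S.Hfun m y'.1 - y'.1)) =
        (S.Hfun m y'.1 - y'.1) - (S.Hfun m y.1 - y.1) := by abel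
    rw [he]
    have hlp := S.Hfun_lip m hy' hy
    have hcast : ((1/4 : ℝ≥0) : ℝ) = 1/4 := by norm_num
    rw [Subtype.dist_eq, dist_eq_norm, hcast]
    calc ‖(S.Hfun m y'.1 - y'.1) - (S.Hfun m y.1 - y.1)‖ ≤ 1/4 * ‖y'.1 - y.1‖ := hlp
      _ = 1/4 * ‖y.1 - y'.1‖ := by rw [norm_sub_rev]
  have hcontr : ContractingWith (1/4 : ℝ≥0) Tmap := by
    refine ⟨?_, hlip⟩
    rw [← NNReal.coe_lt_coe]
    push_cast
    norm_num
  set y : ↥A := ContractingWith.fixedPoint Tmap hcontr with hy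
  have hfix : Tmap y = y := hcontr.fixedPoint_isFixedPt
  refine ⟨y.1, mem_closedBall_zero_iff.mp y.2, ?_⟩
  have h1 : ζ - (S.Hfun m y.1 - y.1) = y.1 := congrArg Subtype.val hfix
  have h2 : ζ - S.Hfun m y.1 = 0 := by
    have := congrArg (fun t => t - y.1) h1
    calc ζ - S.Hfun m y.1 = ζ - (S.Hfun m y.1 - y.1) - y.1 := by abel
      _ = y.1 - y.1 := by rw [h1]
      _ = 0 := by abel
  have := sub_eq_zero.mp h2
  exact this.symm

end Squeeze

namespace Squeeze

variable {k : ℕ} {f : ℕ → Ek k → Ek k} {a b : ℝ}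

/-- The derivative of the limit map is invertible on the small ball. -/
lemma g'_equiv (S : Squeeze k f a b) (m : ℕ) {x : Ek k} (hx : ‖x‖ ≤ S.s0) :
    ∃ e : Ek k ≃L[ℂ] Ek k, (e : Ek k →L[ℂ] Ek k) = S.g' m x := by
  set t : Ek k →L[ℂ] Ek k := 1 - S.g' m x with htdef
  have ht : ‖t‖ < 1 := by
    have h1 := S.g'_near_id m hx
    have heq : t = -(S.g' m x - ContinuousLinearMap.id ℂ (Ek k)) := by
      rw [htdef, neg_sub]
      rfl
    rw [heq, norm_neg]
    calc ‖S.g' m x - ContinuousLinearMap.id ℂ (Ek k)‖ ≤ 1/4 := h1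
      _ < 1 := by norm_num
  refine ⟨ContinuousLinearEquiv.ofUnit (Units.oneSub t ht), ?_⟩
  have hval : ((ContinuousLinearEquiv.ofUnit (Units.oneSub t ht)) : Ek k →L[ℂ] Ek k)
      = (Units.oneSub t ht).val := by
    ext x
    rfl
  rw [hval, Units.val_oneSub, htdef, sub_sub_cancel]

lemma basin_eq_seqComp :
    {z : Ek k | Tendsto (fun n => seqComp f n z) atTop (𝓝 0)} = basinSet f := by
  ext z
  simp only [mem_setOf_eq, basinSet]
  constructor <;> intro h <;>
    · convert h using 2
      rw [seqComp_eq_Tcomp]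

lemma mem_basin_of_le_one (S : Squeeze k f a b) {z : Ek k} {m : ℕ}
    (hm : ‖Tcomp f 0 m z‖ ≤ 1) : z ∈ basinSet f := by
  have key : Tendsto (fun n => Tcomp f 0 (m+n) z) atTop (𝓝 0) := by
    apply squeeze_zero_norm (a := fun n => b^n * ‖Tcomp f 0 m z‖)
    · intro n
      rw [Tcomp_add]
      exact S.Tcomp_norm_le m n hm
    · have := (tendsto_pow_atTop_nhds_zero_of_lt_one S.hb0.le S.hb1).mul_const
        ‖Tcomp f 0 m z‖
      simpa using this
  have heq : (fun n => Tcomp f 0 (m+n) z) = fun n => Tcomp f 0 (n+m) z :=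
    funext fun n => by rw [add_comm]
  rw [heq] at key
  exact (tendsto_add_atTop_iff_nat m).mp key

lemma basin_exists_small (S : Squeeze k f a b) {z : Ek k} (hz : z ∈ basinSet f) :
    ∃ m, ‖Tcomp f 0 m z‖ ≤ S.s0 := by
  have h := Metric.tendsto_nhds.mp hz S.s0 S.s0_pos
  obtain ⟨m, hm⟩ := h.exists
  rw [dist_zero_right] at hm
  exact ⟨m, hm.le⟩

lemma small_persist (S : Squeeze k f a b) {z : Ek k} {m j : ℕ}
    (hm : ‖Tcomp f 0 m z‖ ≤ S.s0) (hj : m ≤ j) : ‖Tcomp f 0 j z‖ ≤ S.s0 := by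
  obtain ⟨n, rfl⟩ := Nat.exists_eq_add_of_le hj
  rw [Tcomp_add]
  have h1 : ‖Tcomp f 0 m z‖ ≤ 1 := le_trans hm S.s0_lt_one.le
  refine le_trans (S.Tcomp_norm_le m n h1) ?_
  calc b^n * ‖Tcomp f 0 m z‖ ≤ 1 * S.s0 :=
        mul_le_mul (pow_le_one₀ S.hb0.le S.hb1.le) hm (norm_nonneg _) zero_le_one
    _ = S.s0 := one_mul _

lemma basin_open (S : Squeeze k f a b) : IsOpen (basinSet f) := by
  rw [isOpen_iff_forall_mem_open]
  intro z hz
  obtain ⟨m, hm⟩ := S.basin_exists_small hz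
  refine ⟨{w | ‖Tcomp f 0 m w‖ < 1}, ?_, ?_, ?_⟩
  · intro w hw
    exact S.mem_basin_of_le_one (le_of_lt hw)
  · exact isOpen_lt (continuous_norm.comp (S.Tcomp_diff 0 m).continuous) continuous_const
  · exact lt_of_le_of_lt hm S.s0_lt_one

lemma Hfun_strict (S : Squeeze k f a b) (m : ℕ) {x : Ek k} (hx : x ∈ ball (0:Ek k) 1) :
    HasStrictFDerivAt (S.Hfun m) (S.g' m x) x := by
  apply hasStrictFDerivAt_of_hasFDerivAt_of_continuousAt
  · filter_upwards [isOpen_ball.mem_nhds hx] with y hy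
    exact S.Hfun_hasFDerivAt m hy
  · exact (S.g'_continuousOn m).continuousAt (isOpen_ball.mem_nhds hx)

lemma Hglob_strict (S : Squeeze k f a b) {z : Ek k} {m : ℕ}
    (hm : ‖Tcomp f 0 m z‖ ≤ S.s0) :
    ∃ e : Ek k ≃L[ℂ] Ek k, HasStrictFDerivAt (S.Hfun 0) (e : Ek k →L[ℂ] Ek k) z := by
  obtain ⟨e2, he2⟩ := S.g'_equiv m hm
  have hy1 : Tcomp f 0 m z ∈ ball (0:Ek k) 1 :=
    mem_ball_zero_iff.mpr (lt_of_le_of_lt hm S.s0_lt_one)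
  -- the three pieces
  have h1 : HasStrictFDerivAt (Tcomp f 0 m) (fderiv ℂ (Tcomp f 0 m) z) z :=
    entire_hasStrictFDerivAt (S.Tcomp_diff 0 m) z
  have h2 : HasStrictFDerivAt (S.Hfun m) (S.g' m (Tcomp f 0 m z)) (Tcomp f 0 m z) :=
    S.Hfun_strict m hy1
  have h3 : HasStrictFDerivAt ((S.P 0 m).symm)
      (((S.P 0 m).symm : Ek k →L[ℂ] Ek k)) (S.Hfun m (Tcomp f 0 m z)) :=
    (S.P 0 m).symm.hasStrictFDerivAt
  have hstrict : HasStrictFDerivAt (fun w => (S.P 0 m).symm (S.Hfun m (Tcomp f 0 m w)))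
      (((S.P 0 m).symm : Ek k →L[ℂ] Ek k).comp
        ((S.g' m (Tcomp f 0 m z)).comp (fderiv ℂ (Tcomp f 0 m) z))) z := by
    have hcomp := (h3.comp (Tcomp f 0 m z) h2).comp z h1
    rw [ContinuousLinearMap.comp_assoc] at hcomp
    exact hcomp
  have hev : (fun w => (S.P 0 m).symm (S.Hfun m (Tcomp f 0 m w))) =ᶠ[𝓝 z] S.Hfun 0 := by
    have hopen : IsOpen {w : Ek k | ‖Tcomp f 0 m w‖ < 1} :=
      isOpen_lt (continuous_norm.comp (S.Tcomp_diff 0 m).continuous) continuous_const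
    have hzmem : z ∈ {w : Ek k | ‖Tcomp f 0 m w‖ < 1} :=
      lt_of_le_of_lt hm S.s0_lt_one
    filter_upwards [hopen.mem_nhds hzmem] with w hw
    exact (S.Hfun_glob_eq m (le_of_lt hw)).symm
  set TD : Ek k ≃L[ℂ] Ek k :=
    invDerivEquiv (S.Tcomp_diff 0 m) (S.Tinv_diff m) (S.Tinv_Tcomp m) (S.Tcomp_Tinv m) z
    with hTD
  refine ⟨TD.trans (e2.trans (S.P 0 m).symm), ?_⟩
  have hco : ((TD.trans (e2.trans (S.P 0 m).symm)) : Ek k →L[ℂ] Ek k)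
      = ((S.P 0 m).symm : Ek k →L[ℂ] Ek k).comp
          ((e2 : Ek k →L[ℂ] Ek k).comp (TD : Ek k →L[ℂ] Ek k)) := by
    ext v
    rfl
  rw [hco, he2, hTD, invDerivEquiv_coe]
  exact hstrict.congr_of_eventuallyEq hev

lemma Hglob_inj (S : Squeeze k f a b) {z w : Ek k} (hz : z ∈ basinSet f)
    (hw : w ∈ basinSet f) (h : S.Hfun 0 z = S.Hfun 0 w) : z = w := by
  obtain ⟨m1, hm1⟩ := S.basin_exists_small hz
  obtain ⟨m2, hm2⟩ := S.basin_exists_small hw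
  set m := max m1 m2 with hm
  have hz' : ‖Tcomp f 0 m z‖ ≤ S.s0 := S.small_persist hm1 (le_max_left _ _)
  have hw' : ‖Tcomp f 0 m w‖ ≤ S.s0 := S.small_persist hm2 (le_max_right _ _)
  have e1 := S.Hfun_glob_eq m (le_trans hz' S.s0_lt_one.le)
  have e2 := S.Hfun_glob_eq m (le_trans hw' S.s0_lt_one.le)
  rw [e1, e2] at h
  have h2 := (S.P 0 m).symm.injective h
  have h3 := S.Hfun_inj_s0 m hz' hw' h2
  calc z = S.Tinv m (Tcomp f 0 m z) := (S.Tinv_Tcomp m z).symm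
    _ = S.Tinv m (Tcomp f 0 m w) := by rw [h3]
    _ = w := S.Tinv_Tcomp m w

lemma Hglob_surj (S : Squeeze k f a b) (ζ : Ek k) :
    ∃ z, z ∈ basinSet f ∧ S.Hfun 0 z = ζ := by
  have hhalf : 0 < S.s0/2 := by linarith [S.s0_pos]
  have htend : Tendsto (fun m => b^m * ‖ζ‖) atTop (𝓝 0) := by
    have := (tendsto_pow_atTop_nhds_zero_of_lt_one S.hb0.le S.hb1).mul_const ‖ζ‖
    simpa using this
  obtain ⟨m, hm⟩ := (htend.eventually (gt_mem_nhds hhalf)).exists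
  have hPζ : ‖S.P 0 m ζ‖ ≤ S.s0/2 := le_of_lt (lt_of_le_of_lt (S.P_norm_le 0 m ζ) hm)
  obtain ⟨y, hy, hHy⟩ := S.Hfun_surj_s0 m hPζ
  refine ⟨S.Tinv m y, ?_, ?_⟩
  · apply S.mem_basin_of_le_one (m := m)
    rw [S.Tcomp_Tinv m y]
    exact le_trans hy S.s0_lt_one.le
  · have hT : Tcomp f 0 m (S.Tinv m y) = y := S.Tcomp_Tinv m y
    have := S.Hfun_glob_eq m (z := S.Tinv m y) (by rw [hT]; exact le_trans hy S.s0_lt_one.le)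
    rw [this, hT, hHy, (S.P 0 m).symm_apply_apply]

end Squeeze

/-- `Ω` is biholomorphic to `ℂ^k`: there is a holomorphic bijection `H : Ω → ℂ^k`
with holomorphic inverse `G`. -/
def BiholToCk {k : ℕ} (Ω : Set (Ek k)) : Prop :=
  ∃ H G : Ek k → Ek k,
    DifferentiableOn ℂ H Ω ∧ Differentiable ℂ G ∧
    (∀ z ∈ Ω, G (H z) = z) ∧ (∀ w, G w ∈ Ω ∧ H (G w) = w)

/-- if `0 < a < b < 1`, `b² < a`, and every `f_n` satisfies
`a‖z‖ ≤ ‖f_n(z)‖ ≤ b‖z‖` on the closed unit ball, then the basin of attraction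
`Ω* = {z : f_n ∘ ⋯ ∘ f_1 (z) → 0}` is biholomorphic to `ℂ^k`. -/
theorem basin_biholomorphic_of_squeezed (k : ℕ) (hk : 2 ≤ k)
    (f : ℕ → Ek k → Ek k) (hf : ∀ n, 1 ≤ n → IsAutomorphismOf (f n))
    (a b : ℝ) (ha : 0 < a) (hab : a < b) (hb1 : b < 1) (hba : b ^ 2 < a)
    (hbound : ∀ n, 1 ≤ n → ∀ z : Ek k, ‖z‖ ≤ 1 →
      a * ‖z‖ ≤ ‖f n z‖ ∧ ‖f n z‖ ≤ b * ‖z‖) :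
    BiholToCk {z : Ek k | Tendsto (fun n => seqComp f n z) atTop (nhds 0)} := by
  have S : Squeeze k f a b := ⟨hf, ha, hab, hb1, hba, hbound⟩
  rw [show {z : Ek k | Tendsto (fun n => seqComp f n z) atTop (nhds 0)} = basinSet f from
    Squeeze.basin_eq_seqComp]
  set G : Ek k → Ek k := fun ζ => Classical.choose (S.Hglob_surj ζ) with hG
  have hGspec : ∀ ζ, G ζ ∈ basinSet f ∧ S.Hfun 0 (G ζ) = ζ :=
    fun ζ => Classical.choose_spec (S.Hglob_surj ζ)
  refine ⟨S.Hfun 0, G, ?_, ?_, ?_, ?_⟩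
  · -- H is holomorphic on the basin
    intro z hz
    obtain ⟨m, hm⟩ := S.basin_exists_small hz
    obtain ⟨e, he⟩ := S.Hglob_strict hm
    exact he.differentiableAt.differentiableWithinAt
  · -- G is entire
    intro ζ
    obtain ⟨hzΩ, hzH⟩ := hGspec ζ
    obtain ⟨m, hm⟩ := S.basin_exists_small hzΩ
    obtain ⟨e, he⟩ := S.Hglob_strict hm
    set li := HasStrictFDerivAt.localInverse (S.Hfun 0) e (G ζ) he with hli
    have h1 : ∀ᶠ w in 𝓝 ζ, S.Hfun 0 (li w) = w := by
      have := he.eventually_right_inverse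
      rwa [hzH] at this
    have h2 : Tendsto li (𝓝 ζ) (𝓝 (G ζ)) := by
      have := he.localInverse_tendsto
      rwa [hzH] at this
    have h3 : ∀ᶠ w in 𝓝 ζ, li w ∈ basinSet f :=
      h2.eventually (Filter.eventually_mem_set.mpr (S.basin_open.mem_nhds hzΩ))
    have h4 : G =ᶠ[𝓝 ζ] li := by
      filter_upwards [h1, h3] with w hw1 hw3
      exact S.Hglob_inj (hGspec w).1 hw3 (by rw [(hGspec w).2, hw1])
    have h5 : DifferentiableAt ℂ li ζ := by
      have := he.to_localInverse
      rw [hzH] at this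
      exact this.differentiableAt
    exact (h4.differentiableAt_iff).mpr h5
  · -- left inverse on the basin
    intro z hz
    exact S.Hglob_inj (hGspec (S.Hfun 0 z)).1 hz ((hGspec (S.Hfun 0 z)).2)
  · -- right inverse
    intro w
    exact hGspec w

end
end

section
/- Let k ≥ 2 and let Ω ⊊ ℂ^k be a nonempty proper open subset that is biholomorphic to ℂ^k and is Runge, in the sense that every holomorphic function on Ω is the limit, uniformly on every compact subset of Ω, of polynomials ℂ^k → ℂ. Then for every p ∈ ∂Ω and every ε > 0, the Hausdorff dimension of ∂Ω ∩ B(p, ε) is at least 2k − 1. -/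
open Filter Metric Set MeasureTheory
open scoped ENNReal
open Topology

noncomputable section

instance {k : ℕ} : MeasurableSpace (Ek k) := borel _
instance {k : ℕ} : BorelSpace (Ek k) := ⟨rfl⟩

/-- `Ω` is Runge: every function holomorphic on `Ω` can be approximated uniformly on
compact subsets of `Ω` by polynomials. -/
def IsRunge {k : ℕ} (Ω : Set (Ek k)) : Prop :=
  ∀ f : Ek k → ℂ, DifferentiableOn ℂ f Ω →
    ∀ K : Set (Ek k), K ⊆ Ω → IsCompact K → ∀ ε : ℝ, 0 < ε →
      ∃ q : MvPolynomial (Fin k) ℂ,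
        ∀ z ∈ K, ‖f z - MvPolynomial.eval (fun i => z i) q‖ < ε

section Helpers

variable {k : ℕ}

lemma coord_differentiable (i : Fin k) : Differentiable ℂ (fun z : Ek k => z i) :=
  (differentiable_pi.mp (PiLp.continuousLinearEquiv 2 ℂ (fun _ : Fin k => ℂ)).differentiable) i

lemma coord_norm_le (z : Ek k) (i : Fin k) : ‖z i‖ ≤ ‖z‖ := by
  have h : ‖z i‖ ^ 2 ≤ ∑ j, ‖z j‖ ^ 2 :=
    Finset.single_le_sum (f := fun j => ‖z j‖ ^ 2) (fun j _ => by positivity) (Finset.mem_univ i)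
  calc ‖z i‖ = Real.sqrt (‖z i‖ ^ 2) := by rw [Real.sqrt_sq (norm_nonneg _)]
    _ ≤ Real.sqrt (∑ j, ‖z j‖ ^ 2) := Real.sqrt_le_sqrt h
    _ = ‖z‖ := (EuclideanSpace.norm_eq z).symm

lemma norm_le_of_coords (z : Ek k) (m : ℝ) (hm : 0 ≤ m) (h : ∀ i, ‖z i‖ ≤ m) :
    ‖z‖ ≤ Real.sqrt k * m := by
  rw [EuclideanSpace.norm_eq]
  calc Real.sqrt (∑ j, ‖z j‖ ^ 2) ≤ Real.sqrt (∑ _j : Fin k, m ^ 2) := by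
        apply Real.sqrt_le_sqrt
        exact Finset.sum_le_sum fun j _ => by
          have := h j; nlinarith [norm_nonneg (z j)]
    _ = Real.sqrt (k * m ^ 2) := by rw [Finset.sum_const, Finset.card_univ, Fintype.card_fin,
          nsmul_eq_mul]
    _ = Real.sqrt k * m := by
        rw [Real.sqrt_mul (Nat.cast_nonneg k), Real.sqrt_sq hm]

lemma poly_differentiable (q : MvPolynomial (Fin k) ℂ) :
    Differentiable ℂ (fun z : Ek k => MvPolynomial.eval (fun i => z i) q) := by
  induction q using MvPolynomial.induction_on with
  | C a => simpa using differentiable_const (a : ℂ)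
  | add p q hp hq => simp only [map_add]; exact hp.add hq
  | mul_X p i hp => simp only [map_mul, MvPolynomial.eval_X]; exact hp.mul (coord_differentiable i)

/-- **Step 1**: an affine analytic disc with boundary circle in `Ω` lies in `Ω`. -/
lemma disc_lemma {Ω : Set (Ek k)} (hopen : IsOpen Ω)
    (hbihol : BiholToCk Ω) (hRunge : IsRunge Ω)
    (c v : Ek k) (hC : ∀ ζ : ℂ, ‖ζ‖ = 1 → c + ζ • v ∈ Ω) :
    ∀ ζ : ℂ, ‖ζ‖ ≤ 1 → c + ζ • v ∈ Ω := by
  obtain ⟨H, G, hH, hG, hGH, hHG⟩ := hbihol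
  set ψ : ℂ → Ek k := fun ζ => c + ζ • v with hψ
  have hψdiff : Differentiable ℂ ψ := (differentiable_id.smul_const v).const_add c
  have hψcont : Continuous ψ := hψdiff.continuous
  set K : Set (Ek k) := ψ '' sphere (0 : ℂ) 1 with hK
  have hKΩ : K ⊆ Ω := by
    rintro _ ⟨ζ, hζ, rfl⟩
    exact hC ζ (by simpa [mem_sphere_iff_norm] using hζ)
  have hKc : IsCompact K := (isCompact_sphere (0:ℂ) 1).image hψcont
  have hfd : ∀ i : Fin k, DifferentiableOn ℂ (fun z => H z i) Ω :=
    fun i => (coord_differentiable i).comp_differentiableOn hH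
  have hq : ∀ p : ℕ × Fin k, ∃ q : MvPolynomial (Fin k) ℂ,
      ∀ z ∈ K, ‖H z p.2 - MvPolynomial.eval (fun j => z j) q‖ < 1 / (p.1 + 1) :=
    fun p => hRunge _ (hfd p.2) K hKΩ hKc _ (by positivity)
  choose q hq using hq
  set F : ℕ → ℂ → Fin k → ℂ := fun n ζ i => MvPolynomial.eval (fun j => ψ ζ j) (q (n, i)) with hF
  have hFdiff : ∀ n i, Differentiable ℂ (fun ζ => F n ζ i) :=
    fun n i => (poly_differentiable (q (n, i))).comp hψdiff
  have hFsph : ∀ (n : ℕ) (i : Fin k), ∀ ζ ∈ sphere (0:ℂ) 1,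
      ‖F n ζ i - H (ψ ζ) i‖ < 1 / (n + 1) := by
    intro n i ζ hζ
    have := hq (n, i) (ψ ζ) ⟨ζ, hζ, rfl⟩
    simpa [norm_sub_rev] using this
  have key : ∀ (n m : ℕ) (i : Fin k), ∀ ζ ∈ closedBall (0:ℂ) 1,
      ‖F n ζ i - F m ζ i‖ ≤ 1 / (n + 1) + 1 / (m + 1) := by
    intro n m i ζ hζ
    have hd : DiffContOnCl ℂ (fun ζ => F n ζ i - F m ζ i) (ball (0:ℂ) 1) :=
      ((hFdiff n i).sub (hFdiff m i)).diffContOnCl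
    have hcl : ζ ∈ closure (ball (0:ℂ) 1) := by
      rw [closure_ball (0:ℂ) one_ne_zero]; exact hζ
    refine Complex.norm_le_of_forall_mem_frontier_norm_le isBounded_ball hd ?_ hcl
    intro w hw
    rw [frontier_ball (0:ℂ) one_ne_zero] at hw
    have h1 := hFsph n i w hw
    have h2 := hFsph m i w hw
    calc ‖F n w i - F m w i‖
        ≤ ‖F n w i - H (ψ w) i‖ + ‖H (ψ w) i - F m w i‖ := norm_sub_le_norm_sub_add_norm_sub _ _ _
      _ ≤ 1 / (n + 1) + 1 / (m + 1) := by
          rw [norm_sub_rev (H (ψ w) i)]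
          exact add_le_add h1.le h2.le
  -- pointwise limits
  set Φ : ℂ → Fin k → ℂ := fun ζ i => limUnder atTop (fun n => F n ζ i) with hΦ
  have hb0 : Tendsto (fun N : ℕ => 2 / (N + 1) : ℕ → ℝ) atTop (𝓝 0) := by
    have := tendsto_one_div_add_atTop_nhds_zero_nat (𝕜 := ℝ)
    have h2 := this.const_mul (2:ℝ)
    simpa [mul_one_div, div_eq_mul_inv] using h2
  have hconv : ∀ ζ ∈ closedBall (0:ℂ) 1, ∀ i,
      Tendsto (fun n => F n ζ i) atTop (𝓝 (Φ ζ i)) := by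
    intro ζ hζ i
    have hcs : CauchySeq (fun n => F n ζ i) := by
      apply cauchySeq_of_le_tendsto_0 (fun N : ℕ => 2 / (N + 1)) ?_ hb0
      intro a b N ha hb
      rw [dist_eq_norm]
      refine (key a b i ζ hζ).trans ?_
      have h1 : (1:ℝ) / (a + 1) ≤ 1 / (N + 1) := by
        apply one_div_le_one_div_of_le (by positivity)
        exact_mod_cast Nat.succ_le_succ ha
      have h2 : (1:ℝ) / (b + 1) ≤ 1 / (N + 1) := by
        apply one_div_le_one_div_of_le (by positivity)
        exact_mod_cast Nat.succ_le_succ hb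
      calc (1:ℝ) / (a+1) + 1/(b+1) ≤ 1/(N+1) + 1/(N+1) := add_le_add h1 h2
        _ = 2 / (N+1) := by ring
    exact hcs.tendsto_limUnder
  have herr : ∀ (n : ℕ), ∀ ζ ∈ closedBall (0:ℂ) 1, ∀ i,
      ‖F n ζ i - Φ ζ i‖ ≤ 1 / (n + 1) := by
    intro n ζ hζ i
    have hf : Tendsto (fun m => ‖F n ζ i - F m ζ i‖) atTop (𝓝 ‖F n ζ i - Φ ζ i‖) :=
      (Tendsto.const_sub _ (hconv ζ hζ i)).norm
    have hg : Tendsto (fun m : ℕ => 1 / (n + 1) + 1 / (m + 1) : ℕ → ℝ) atTop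
        (𝓝 (1 / (n + 1) + 0)) :=
      tendsto_const_nhds.add tendsto_one_div_add_atTop_nhds_zero_nat
    have := le_of_tendsto_of_tendsto' hf hg (fun m => key n m i ζ hζ)
    simpa using this
  have hbdry : ∀ ζ ∈ sphere (0:ℂ) 1, ∀ i, Φ ζ i = H (ψ ζ) i := by
    intro ζ hζ i
    have hζ' : ζ ∈ closedBall (0:ℂ) 1 := sphere_subset_closedBall hζ
    have hbound : ∀ n : ℕ, ‖Φ ζ i - H (ψ ζ) i‖ ≤ 1 / (n+1) + 1 / (n+1) := by
      intro n
      calc ‖Φ ζ i - H (ψ ζ) i‖ ≤ ‖Φ ζ i - F n ζ i‖ + ‖F n ζ i - H (ψ ζ) i‖ :=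
            norm_sub_le_norm_sub_add_norm_sub _ _ _
        _ ≤ 1 / (n+1) + 1 / (n+1) := by
            refine add_le_add ?_ (hFsph n i ζ hζ).le
            rw [norm_sub_rev]; exact herr n ζ hζ' i
    have hlim : Tendsto (fun n : ℕ => 1 / (n+1) + 1 / (n+1) : ℕ → ℝ) atTop (𝓝 0) := by
      have := tendsto_one_div_add_atTop_nhds_zero_nat (𝕜 := ℝ)
      simpa using this.add this
    have hle : ‖Φ ζ i - H (ψ ζ) i‖ ≤ 0 :=
      le_of_tendsto_of_tendsto' tendsto_const_nhds hlim hbound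
    have := le_antisymm hle (norm_nonneg _)
    rwa [norm_eq_zero, sub_eq_zero] at this
  -- bundle into Euclidean space valued maps
  set e2p := PiLp.continuousLinearEquiv 2 ℂ (fun _ : Fin k => ℂ) with he2p
  set FE : ℕ → ℂ → Ek k := fun n ζ => e2p.symm (F n ζ) with hFE
  set ΦE : ℂ → Ek k := fun ζ => e2p.symm (Φ ζ) with hΦE
  have hcoordeq : ∀ (x : Fin k → ℂ) (i : Fin k), (e2p.symm x) i = x i := fun _ _ => rfl
  have hsqk : Tendsto (fun n : ℕ => Real.sqrt k * (1/(n+1)) : ℕ → ℝ) atTop (𝓝 0) := by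
    have := tendsto_one_div_add_atTop_nhds_zero_nat.const_mul (Real.sqrt k)
    simpa using this
  have hunif : TendstoUniformlyOn FE ΦE atTop (closedBall (0:ℂ) 1) := by
    rw [Metric.tendstoUniformlyOn_iff]
    intro ε hε
    have := (hsqk.eventually (eventually_lt_nhds hε))
    filter_upwards [this] with n hn ζ hζ
    have hd : dist (ΦE ζ) (FE n ζ) ≤ Real.sqrt k * (1/(n+1)) := by
      rw [dist_eq_norm]
      apply norm_le_of_coords _ _ (by positivity)
      intro i
      have : (ΦE ζ - FE n ζ) i = Φ ζ i - F n ζ i := rfl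
      rw [this, norm_sub_rev]
      exact herr n ζ hζ i
    exact lt_of_le_of_lt hd hn
  have hFEcont : ∀ n : ℕ, ContinuousOn (FE n) (closedBall (0:ℂ) 1) := by
    intro n
    apply Continuous.continuousOn
    apply e2p.symm.continuous.comp
    exact continuous_pi fun i => (hFdiff n i).continuous
  have hΦEcont : ContinuousOn ΦE (closedBall (0:ℂ) 1) :=
    hunif.continuousOn (Eventually.of_forall hFEcont).frequently
  have hΦEdiff : DifferentiableOn ℂ ΦE (ball (0:ℂ) 1) := by
    apply TendstoLocallyUniformlyOn.differentiableOn
      (hunif.mono ball_subset_closedBall).tendstoLocallyUniformlyOn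
    · apply Eventually.of_forall
      intro n
      apply Differentiable.differentiableOn
      apply e2p.symm.differentiable.comp
      exact differentiable_pi.mpr fun i => hFdiff n i
    · exact isOpen_ball
  set g : ℂ → Ek k := fun ζ => G (ΦE ζ) with hg
  have hgΩ : ∀ ζ, g ζ ∈ Ω := fun ζ => (hHG _).1
  have hgbd : ∀ ζ ∈ sphere (0:ℂ) 1, g ζ = ψ ζ := by
    intro ζ hζ
    have hΦH : ΦE ζ = H (ψ ζ) := by
      ext i
      exact hbdry ζ hζ i
    rw [hg]
    simp only [hΦH]
    exact hGH _ (hKΩ ⟨ζ, hζ, rfl⟩)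
  set h : ℂ → Ek k := fun ζ => g ζ - ψ ζ with hh
  have hhd : DiffContOnCl ℂ h (ball (0:ℂ) 1) := by
    constructor
    · exact (hG.comp_differentiableOn hΦEdiff).sub hψdiff.differentiableOn
    · rw [closure_ball (0:ℂ) one_ne_zero]
      exact (hG.continuous.comp_continuousOn hΦEcont).sub hψcont.continuousOn
  intro ζ₀ hζ₀
  have hcl : ζ₀ ∈ closure (ball (0:ℂ) 1) := by
    rw [closure_ball (0:ℂ) one_ne_zero]
    simpa [mem_closedBall, dist_eq_norm] using hζ₀
  have hzero : ‖h ζ₀‖ ≤ 0 := by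
    refine Complex.norm_le_of_forall_mem_frontier_norm_le isBounded_ball hhd ?_ hcl
    intro w hw
    rw [frontier_ball (0:ℂ) one_ne_zero] at hw
    simp [hh, hgbd w hw]
  have : g ζ₀ = ψ ζ₀ := by
    have := le_antisymm hzero (norm_nonneg _)
    rw [norm_eq_zero] at this
    have : g ζ₀ - ψ ζ₀ = 0 := this
    linear_combination (norm := module) this
  show ψ ζ₀ ∈ Ω
  rw [← this]
  exact hgΩ ζ₀

lemma vol_box (c : Fin k → ℂ) (ρ : ℝ) (hρ : 0 ≤ ρ) :
    volume (Set.pi univ fun i => closedBall (c i) ρ) = ENNReal.ofReal ((ρ ^ 2 * Real.pi) ^ k) := by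
  rw [volume_pi_pi]
  have h1 : ∀ i, volume (closedBall (c i) ρ) = ENNReal.ofReal (ρ ^ 2 * Real.pi) := by
    intro i
    rw [Complex.volume_closedBall, ENNReal.ofReal_mul (by positivity), ← NNReal.coe_real_pi,
      ENNReal.ofReal_coe_nnreal, ENNReal.ofReal_pow hρ]
  simp only [h1]
  rw [Finset.prod_const, Finset.card_univ, Fintype.card_fin, ← ENNReal.ofReal_pow (by positivity)]

/-- The 1-parameter family avoidance lemma: the union of images of a set of
Hausdorff dimension `< 2k-1` under a Lipschitz 1-parameter family of maps cannot
fill any ball. -/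
lemma avoid_lemma (E : Set (Ek k)) (d : ℝ) (hd1 : 1 ≤ d) (hd2 : d ≤ 2 * k - 1)
    (hE : μH[d] E = 0) (g : ℝ → Ek k → Ek k) (L : ℝ) (hL : 1 ≤ L)
    (hg : ∀ t ∈ Icc (-4:ℝ) 4, ∀ t' ∈ Icc (-4:ℝ) 4, ∀ e ∈ E, ∀ e' ∈ E,
      ‖g t e - g t' e'‖ ≤ L * (|t - t'| + ‖e - e'‖))
    (a : Ek k) (δ : ℝ) (hδ : 0 < δ) :
    ∃ y : Ek k, dist y a < δ ∧ ∀ t ∈ Icc (-4:ℝ) 4, ∀ e ∈ E, g t e ≠ y := by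
  classical
  have hk1 : 1 ≤ k := by
    by_contra hc
    push_neg at hc
    interval_cases k
    · norm_num at hd2; linarith
  -- the set of "bad" points, viewed in the plain product space
  set Bad : Set (Fin k → ℂ) :=
    {y | ∃ t ∈ Icc (-4:ℝ) 4, ∃ e ∈ E, (fun i => g t e i) = y} with hBad
  set C₀ : ℝ := 10 * ((2*L)^2 * Real.pi) ^ k with hC₀
  have hC₀pos : 0 < C₀ := by positivity
  -- Main claim : Bad is Lebesgue-null
  have main : ∀ θ : ℝ, 0 < θ → θ ≤ 1 → volume Bad ≤ ENNReal.ofReal (2 * C₀ * θ) := by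
    intro θ hθ hθ1
    -- extract a covering of E from the vanishing Hausdorff measure
    obtain ⟨t, htcov, htdiam, htsum⟩ : ∃ t : ℕ → Set (Ek k), E ⊆ ⋃ n, t n ∧
        (∀ n, EMetric.diam (t n) ≤ 1) ∧
        (∑' n, ⨆ _ : (t n).Nonempty, EMetric.diam (t n) ^ d) < ENNReal.ofReal θ := by
      have h0 := hE
      rw [MeasureTheory.Measure.hausdorffMeasure_apply] at h0
      have h1 : (⨅ (t : ℕ → Set (Ek k)) (_ : E ⊆ ⋃ n, t n) (_ : ∀ n, EMetric.diam (t n) ≤ 1),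
          ∑' n, ⨆ _ : (t n).Nonempty, EMetric.diam (t n) ^ d) = 0 := by
        refine le_antisymm ?_ zero_le
        rw [← h0]
        exact le_iSup₂ (f := fun (r : ℝ≥0∞) (_ : 0 < r) =>
          (⨅ (t : ℕ → Set (Ek k)) (_ : E ⊆ ⋃ n, t n) (_ : ∀ n, EMetric.diam (t n) ≤ r),
          ∑' n, ⨆ _ : (t n).Nonempty, EMetric.diam (t n) ^ d)) 1 one_pos
      have h2 : (⨅ (t : ℕ → Set (Ek k)) (_ : E ⊆ ⋃ n, t n) (_ : ∀ n, EMetric.diam (t n) ≤ 1),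
          ∑' n, ⨆ _ : (t n).Nonempty, EMetric.diam (t n) ^ d) < ENNReal.ofReal θ := by
        rw [h1]; exact ENNReal.ofReal_pos.mpr hθ
      rw [iInf_lt_iff] at h2
      obtain ⟨t, ht⟩ := h2
      rw [iInf_lt_iff] at ht
      obtain ⟨hcov, ht⟩ := ht
      rw [iInf_lt_iff] at ht
      obtain ⟨hdiam, ht⟩ := ht
      exact ⟨t, hcov, hdiam, ht⟩
    -- radii and inflated radii
    set r : ℕ → ℝ := fun n => (EMetric.diam (t n)).toReal with hr
    have hrnn : ∀ n, 0 ≤ r n := fun n => ENNReal.toReal_nonneg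
    have hrne : ∀ n, EMetric.diam (t n) ≠ ⊤ := fun n => (lt_of_le_of_lt (htdiam n)
      ENNReal.one_lt_top).ne
    have hr1 : ∀ n, r n ≤ 1 := by
      intro n
      have := ENNReal.toReal_mono ENNReal.one_ne_top (htdiam n)
      simpa using this
    set s : ℕ → ℝ := fun n => max (r n) (θ * (1/2)^(n+1)) with hs
    have hspos : ∀ n, 0 < s n := fun n => lt_max_of_lt_right (by positivity)
    have hs1 : ∀ n, s n ≤ 1 := by
      intro n
      apply max_le (hr1 n)
      calc θ * (1/2)^(n+1) ≤ 1 * (1/2)^(n+1) := by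
            apply mul_le_mul_of_nonneg_right hθ1 (by positivity)
        _ ≤ 1 := by
            rw [one_mul]
            apply pow_le_one₀ (by norm_num) (by norm_num)
    have hrs : ∀ n, r n ≤ s n := fun n => le_max_left _ _
    -- distances within covering pieces
    have hdist : ∀ n, ∀ e ∈ t n, ∀ e' ∈ t n, dist e e' ≤ r n := by
      intro n e he e' he'
      have h1 : edist e e' ≤ EMetric.diam (t n) := EMetric.edist_le_diam_of_mem he he'
      have h2 := ENNReal.toReal_mono (hrne n) h1
      rwa [← dist_edist] at h2
    -- number of grid points and grid
    set M : ℕ → ℕ := fun n => ⌈(8:ℝ) / s n⌉₊ + 1 with hM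
    set τ : ℕ → ℕ → ℝ := fun n m => -4 + m * s n with hτ
    -- centers
    set xc : ℕ → Ek k := fun n => if h : (E ∩ t n).Nonempty then h.choose else a with hxc
    have hxcE : ∀ n, (E ∩ t n).Nonempty → xc n ∈ E ∩ t n := by
      intro n h
      simp only [hxc, dif_pos h]
      exact h.choose_spec
    -- the boxes
    set box : ℕ → ℕ → Set (Fin k → ℂ) := fun n m =>
      if (E ∩ t n).Nonempty ∧ m < M n then
        Set.pi univ (fun i => closedBall (g (τ n m) (xc n) i) (2*L*(s n))) else ∅ with hbox
    -- key numerical facts about the grid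
    have hgrid : ∀ n (t₀ : ℝ), t₀ ∈ Icc (-4:ℝ) 4 →
        (⌊(t₀+4) / s n⌋₊ < M n ∧ τ n (⌊(t₀+4) / s n⌋₊) ∈ Icc (-4:ℝ) 4 ∧
          |t₀ - τ n (⌊(t₀+4) / s n⌋₊)| ≤ s n) := by
      intro n t₀ ht₀
      have htnn : 0 ≤ t₀ + 4 := by linarith [ht₀.1]
      set m : ℕ := ⌊(t₀+4) / s n⌋₊ with hm
      have h1 : (m:ℝ) ≤ (t₀+4) / s n := Nat.floor_le (div_nonneg htnn (hspos n).le)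
      have h1' : (m:ℝ) * s n ≤ t₀ + 4 := by
        rw [← le_div_iff₀ (hspos n)]; exact h1
      have h2 : (t₀+4) / s n < m + 1 := Nat.lt_floor_add_one _
      have h2' : t₀ + 4 < (m + 1) * s n := by
        rw [← div_lt_iff₀ (hspos n)]; exact h2
      have h3 : (t₀+4) / s n ≤ 8 / s n := by
        gcongr
        linarith [ht₀.2]
      refine ⟨?_, ⟨?_, ?_⟩, ?_⟩
      · have h4 : (m:ℝ) ≤ 8 / s n := h1.trans h3
        have h5 : (m:ℝ) ≤ (⌈(8:ℝ) / s n⌉₊ : ℝ) := h4.trans (Nat.le_ceil _)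
        have h6 : m ≤ ⌈(8:ℝ) / s n⌉₊ := by exact_mod_cast h5
        simp only [hM]; omega
      · simp only [hτ]
        have : (0:ℝ) ≤ (m:ℝ) * s n := by positivity
        linarith
      · simp only [hτ]
        have : (m:ℝ) * s n ≤ 8 := by
          calc (m:ℝ) * s n ≤ t₀ + 4 := h1'
            _ ≤ 8 := by linarith [ht₀.2]
        linarith
      · rw [abs_le]
        refine ⟨?_, ?_⟩
        · simp only [hτ]
          nlinarith [(hspos n).le]
        · simp only [hτ]
          linarith
    -- covering claim
    have hcover : Bad ⊆ ⋃ (n : ℕ) (m : ℕ), box n m := by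
      rintro y ⟨t₀, ht₀, e, heE, hy⟩
      obtain ⟨n, hn⟩ : ∃ n, e ∈ t n := by
        have := htcov heE
        simpa using this
      have hnon : (E ∩ t n).Nonempty := ⟨e, heE, hn⟩
      set m : ℕ := ⌊(t₀+4) / s n⌋₊ with hm
      obtain ⟨hmlt, hτm, hτd⟩ := hgrid n t₀ ht₀
      refine mem_iUnion.mpr ⟨n, mem_iUnion.mpr ⟨m, ?_⟩⟩
      have hcond : (E ∩ t n).Nonempty ∧ m < M n := ⟨hnon, hmlt⟩
      show y ∈ (if (E ∩ t n).Nonempty ∧ m < M n then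
        Set.pi univ (fun i => closedBall (g (τ n m) (xc n) i) (2*L*(s n))) else ∅)
      rw [if_pos hcond, Set.mem_univ_pi]
      intro i
      rw [mem_closedBall, dist_eq_norm]
      have hxcmem := hxcE n hnon
      have hbound : ‖g t₀ e - g (τ n m) (xc n)‖ ≤ L * (|t₀ - τ n m| + ‖e - xc n‖) :=
        hg t₀ ht₀ (τ n m) hτm e heE (xc n) hxcmem.1
      have hcoord : ‖y i - g (τ n m) (xc n) i‖ ≤ ‖g t₀ e - g (τ n m) (xc n)‖ := by
        rw [← hy]
        exact coord_norm_le (g t₀ e - g (τ n m) (xc n)) i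
      have hexc : ‖e - xc n‖ ≤ r n := by
        rw [← dist_eq_norm]
        exact hdist n e hn (xc n) hxcmem.2
      calc ‖y i - g (τ n m) (xc n) i‖ ≤ L * (|t₀ - τ n m| + ‖e - xc n‖) :=
            hcoord.trans hbound
        _ ≤ L * (s n + s n) := by
            apply mul_le_mul_of_nonneg_left _ (by linarith)
            exact add_le_add hτd (hexc.trans (hrs n))
        _ = 2 * L * s n := by ring
    -- volume estimate
    have hvol1 : volume Bad ≤ ∑' (n : ℕ) (m : ℕ), volume (box n m) :=
      (measure_mono hcover).trans ((measure_iUnion_le _).trans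
        (ENNReal.tsum_le_tsum fun n => measure_iUnion_le _))
    -- per-index estimate
    have hterm : ∀ n : ℕ, (∑' (m : ℕ), volume (box n m)) ≤
        ENNReal.ofReal C₀ * ((⨆ _ : (t n).Nonempty, EMetric.diam (t n) ^ d) +
          ENNReal.ofReal (θ^d * (1/2)^(n+1))) := by
      intro n
      by_cases hnon : (E ∩ t n).Nonempty
      · -- good index
        have hsum0 : ∀ m ∉ Finset.range (M n), volume (box n m) = 0 := by
          intro m hm
          rw [Finset.mem_range, not_lt] at hm
          have : box n m = ∅ := by
            rw [hbox]
            exact if_neg (fun hcond => absurd hcond.2 (not_lt.mpr hm))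
          rw [this, measure_empty]
        rw [tsum_eq_sum hsum0]
        have hval : ∀ m ∈ Finset.range (M n), volume (box n m) =
            ENNReal.ofReal (((2*L*(s n))^2 * Real.pi) ^ k) := by
          intro m hm
          rw [Finset.mem_range] at hm
          have : box n m =
              Set.pi univ (fun i => closedBall (g (τ n m) (xc n) i) (2*L*(s n))) := by
            rw [hbox]; exact if_pos ⟨hnon, hm⟩
          rw [this, vol_box _ _ (by positivity)]
        rw [Finset.sum_congr rfl hval, Finset.sum_const, Finset.card_range, nsmul_eq_mul]
        -- real arithmetic:  M n * ((2 L s)² π)^k ≤ C₀ * s^(2k-1) ≤ C₀ * s^d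
        have hM10 : (M n : ℝ) ≤ 10 / s n := by
          have h1 : (⌈(8:ℝ) / s n⌉₊ : ℝ) < 8 / s n + 1 :=
            Nat.ceil_lt_add_one (by positivity)
          have h2 : (M n : ℝ) = (⌈(8:ℝ) / s n⌉₊ : ℝ) + 1 := by
            simp [hM]
          have h3 : (1:ℝ) ≤ 1 / s n := by
            rw [le_div_iff₀ (hspos n)]; simpa using hs1 n
          rw [h2]
          have : (8:ℝ)/ s n + 2 ≤ 10 / s n := by
            have : (2:ℝ) ≤ 2 / s n := by
              rw [le_div_iff₀ (hspos n)]; linarith [hs1 n]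
            have heq : (8:ℝ)/s n + 2/s n = 10/s n := by ring
            linarith
          linarith
        have hreal : (M n : ℝ) * (((2*L*(s n))^2 * Real.pi) ^ k) ≤ C₀ * (s n)^d := by
          have hs2k : ((2*L*(s n))^2 * Real.pi) ^ k = ((2*L)^2 * Real.pi) ^ k * (s n)^(2*k) := by
            ring
          have hs2k1 : (s n)^(2*k) = (s n)^(2*k - 1) * s n := by
            rw [← pow_succ]
            congr 1
            omega
          have hrpow : (s n)^(2*k-1) ≤ (s n)^d := by
            have h1 : ((s n) : ℝ)^((2*k-1 : ℕ) : ℝ) = (s n)^(2*k-1 : ℕ) := Real.rpow_natCast _ _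
            rw [← h1]
            apply Real.rpow_le_rpow_of_exponent_ge (hspos n) (hs1 n)
            push_cast [Nat.cast_sub (by omega : 1 ≤ 2*k)]
            linarith
          calc (M n : ℝ) * (((2*L*(s n))^2 * Real.pi) ^ k)
              ≤ (10 / s n) * (((2*L*(s n))^2 * Real.pi) ^ k) := by
                apply mul_le_mul_of_nonneg_right hM10 (by positivity)
            _ = 10 * ((2*L)^2 * Real.pi) ^ k * (s n)^(2*k-1) := by
                rw [hs2k, hs2k1, div_mul_eq_mul_div, div_eq_iff (hspos n).ne']
                ring
            _ ≤ C₀ * (s n)^d := by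
                rw [hC₀]
                apply mul_le_mul_of_nonneg_left hrpow (by positivity)
        have hsd : (s n)^d ≤ (r n)^d + (θ*(1/2)^(n+1))^d := by
          rcases max_cases (r n) (θ * (1/2)^(n+1)) with ⟨heq, _⟩ | ⟨heq, _⟩
          · rw [hs] at *
            simp only [heq]
            have : (0:ℝ) ≤ (θ*(1/2)^(n+1))^d := Real.rpow_nonneg (by positivity) d
            linarith
          · rw [hs] at *
            simp only [heq]
            have : (0:ℝ) ≤ (r n)^d := Real.rpow_nonneg (hrnn n) d
            linarith
        have hgeo_pow : (θ*(1/2)^(n+1))^d ≤ θ^d * (1/2)^(n+1) := by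
          rw [Real.mul_rpow hθ.le (by positivity)]
          apply mul_le_mul_of_nonneg_left _ (Real.rpow_nonneg hθ.le d)
          have h1 : ((1:ℝ)/2)^(n+1) ≤ 1 := pow_le_one₀ (by norm_num) (by norm_num)
          have h2 : (0:ℝ) < ((1:ℝ)/2)^(n+1) := by positivity
          calc (((1:ℝ)/2)^(n+1))^d ≤ (((1:ℝ)/2)^(n+1))^(1:ℝ) :=
                Real.rpow_le_rpow_of_exponent_ge h2 h1 hd1
            _ = ((1:ℝ)/2)^(n+1) := Real.rpow_one _
        -- assemble in ℝ≥0∞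
        have hofr : ENNReal.ofReal ((r n)^d) = ⨆ _ : (t n).Nonempty, EMetric.diam (t n) ^ d := by
          have htne : (t n).Nonempty := ⟨hnon.choose, hnon.choose_spec.2⟩
          rw [iSup_pos htne]
          rw [← ENNReal.ofReal_rpow_of_nonneg (hrnn n) (by linarith : (0:ℝ) ≤ d)]
          rw [hr]
          rw [ENNReal.ofReal_toReal (hrne n)]
        calc (M n : ℝ≥0∞) * ENNReal.ofReal (((2*L*(s n))^2 * Real.pi) ^ k)
            = ENNReal.ofReal ((M n : ℝ) * (((2*L*(s n))^2 * Real.pi) ^ k)) := by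
              rw [ENNReal.ofReal_mul (by positivity), ENNReal.ofReal_natCast]
          _ ≤ ENNReal.ofReal (C₀ * (s n)^d) := ENNReal.ofReal_le_ofReal hreal
          _ ≤ ENNReal.ofReal (C₀ * ((r n)^d + θ^d * (1/2)^(n+1))) := by
              apply ENNReal.ofReal_le_ofReal
              apply mul_le_mul_of_nonneg_left _ hC₀pos.le
              calc (s n)^d ≤ (r n)^d + (θ*(1/2)^(n+1))^d := hsd
                _ ≤ (r n)^d + θ^d * (1/2)^(n+1) := by linarith
          _ = ENNReal.ofReal C₀ * (ENNReal.ofReal ((r n)^d) +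
                ENNReal.ofReal (θ^d * (1/2)^(n+1))) := by
              rw [ENNReal.ofReal_mul hC₀pos.le, ENNReal.ofReal_add
                (Real.rpow_nonneg (hrnn n) d) (by positivity)]
          _ = ENNReal.ofReal C₀ * ((⨆ _ : (t n).Nonempty, EMetric.diam (t n) ^ d) +
                ENNReal.ofReal (θ^d * (1/2)^(n+1))) := by rw [hofr]
      · -- bad index : all boxes are empty
        have : ∀ m : ℕ, volume (box n m) = 0 := by
          intro m
          have : box n m = ∅ := by
            rw [hbox]
            exact if_neg (fun hcond => hnon hcond.1)
          rw [this, measure_empty]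
        simp only [this, tsum_zero]
        exact zero_le
    -- sum the estimates
    have hgeosum : (∑' (n : ℕ), ENNReal.ofReal (θ^d * (1/2)^(n+1))) = ENNReal.ofReal (θ^d) := by
      rw [← ENNReal.ofReal_tsum_of_nonneg (fun n => by positivity)]
      · congr 1
        have heq : (fun n : ℕ => θ^d * (1/2)^(n+1)) = (fun n : ℕ => θ^d / 2 / 2^n) := by
          funext n
          rw [pow_succ, one_div, inv_pow]
          ring
        rw [heq]
        exact tsum_geometric_two' _
      · have heq : (fun n : ℕ => θ^d * (1/2)^(n+1)) = (fun n : ℕ => θ^d / 2 / 2^n) := by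
          funext n
          rw [pow_succ, one_div, inv_pow]
          ring
        rw [heq]
        exact summable_geometric_two' _
    have hθd : θ^d ≤ θ := by
      calc θ^d ≤ θ^(1:ℝ) := Real.rpow_le_rpow_of_exponent_ge hθ hθ1 hd1
        _ = θ := Real.rpow_one θ
    calc volume Bad ≤ ∑' (n : ℕ) (m : ℕ), volume (box n m) := hvol1
      _ ≤ ∑' (n : ℕ), ENNReal.ofReal C₀ * ((⨆ _ : (t n).Nonempty, EMetric.diam (t n) ^ d) +
            ENNReal.ofReal (θ^d * (1/2)^(n+1))) := ENNReal.tsum_le_tsum hterm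
      _ = ENNReal.ofReal C₀ * ((∑' (n : ℕ), ⨆ _ : (t n).Nonempty, EMetric.diam (t n) ^ d) +
            ∑' (n : ℕ), ENNReal.ofReal (θ^d * (1/2)^(n+1))) := by
          rw [ENNReal.tsum_mul_left, ENNReal.tsum_add]
      _ ≤ ENNReal.ofReal C₀ * (ENNReal.ofReal θ + ENNReal.ofReal (θ^d)) := by
          apply mul_le_mul_right _ _
          rw [hgeosum]
          exact add_le_add htsum.le le_rfl
      _ ≤ ENNReal.ofReal C₀ * (ENNReal.ofReal θ + ENNReal.ofReal θ) := by
          apply mul_le_mul_right _ _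
          exact add_le_add le_rfl (ENNReal.ofReal_le_ofReal hθd)
      _ = ENNReal.ofReal (2 * C₀ * θ) := by
          rw [← ENNReal.ofReal_add hθ.le hθ.le, ← ENNReal.ofReal_mul hC₀pos.le]
          congr 1
          ring
  -- Bad is null
  have hBad0 : volume Bad = 0 := by
    by_contra h
    have hpos : 0 < volume Bad := zero_lt_iff.mpr h
    set V : ℝ≥0∞ := min (volume Bad) 1 with hV
    have hVpos : 0 < V := lt_min hpos zero_lt_one
    have hVne : V ≠ ⊤ := (min_le_right _ _).trans_lt ENNReal.one_lt_top |>.ne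
    have hVtR : 0 < V.toReal := ENNReal.toReal_pos hVpos.ne' hVne
    set θ : ℝ := min 1 (V.toReal / (4 * C₀)) with hθdef
    have hθpos : 0 < θ := lt_min one_pos (by positivity)
    have hθ1 : θ ≤ 1 := min_le_left _ _
    have hbound := main θ hθpos hθ1
    have hlt : 2 * C₀ * θ < V.toReal := by
      have h1 : θ ≤ V.toReal / (4 * C₀) := min_le_right _ _
      have h2 : 2 * C₀ * θ ≤ 2 * C₀ * (V.toReal / (4 * C₀)) := by
        apply mul_le_mul_of_nonneg_left h1 (by positivity)
      have h3 : 2 * C₀ * (V.toReal / (4 * C₀)) = V.toReal / 2 := by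
        field_simp
        ring
      rw [h3] at h2
      linarith
    have : volume Bad < V := by
      calc volume Bad ≤ ENNReal.ofReal (2 * C₀ * θ) := hbound
        _ < ENNReal.ofReal (V.toReal) := by
            rw [ENNReal.ofReal_lt_ofReal_iff hVtR]
            exact hlt
        _ = V := ENNReal.ofReal_toReal hVne
    exact absurd this (not_lt.mpr (min_le_left _ _))
  -- pick a point near `a` outside `Bad`
  set δ' : ℝ := δ / (k + 1) with hδ'
  have hδ'pos : 0 < δ' := by positivity
  set smallBox : Set (Fin k → ℂ) := Set.pi univ (fun i => ball (a i) δ') with hsmall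
  have hvolbox : 0 < volume smallBox := by
    rw [hsmall, volume_pi_pi, zero_lt_iff]
    apply Finset.prod_ne_zero_iff.mpr
    intro i _
    rw [Complex.volume_ball]
    apply mul_ne_zero
    · apply pow_ne_zero
      simpa using ENNReal.ofReal_pos.mpr hδ'pos |>.ne'
    · simp only [ne_eq, ENNReal.coe_eq_zero]
      rw [← NNReal.coe_eq_zero, NNReal.coe_real_pi]
      exact Real.pi_ne_zero
  have hnotsub : ¬ (smallBox ⊆ Bad) := by
    intro hsub
    have := (measure_mono hsub).trans_eq hBad0
    exact absurd this (by simpa using hvolbox.ne')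
  obtain ⟨y', hy'box, hy'bad⟩ := not_subset.mp hnotsub
  set y : Ek k := (PiLp.continuousLinearEquiv 2 ℂ (fun _ : Fin k => ℂ)).symm y' with hy
  have hycoord : ∀ i, y i = y' i := fun i => rfl
  refine ⟨y, ?_, ?_⟩
  · rw [dist_eq_norm]
    have hcb : ∀ i, ‖(y - a) i‖ ≤ δ' := by
      intro i
      have h1 : y' i ∈ ball (a i) δ' := by
        rw [hsmall, Set.mem_univ_pi] at hy'box
        exact hy'box i
      rw [mem_ball, dist_eq_norm] at h1
      have : (y - a) i = y' i - a i := by rw [← hycoord i]; rfl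
      rw [this]
      exact h1.le
    have h2 : ‖y - a‖ ≤ Real.sqrt k * δ' := norm_le_of_coords _ _ hδ'pos.le hcb
    have h3 : Real.sqrt k * δ' < δ := by
      have hsq : Real.sqrt k < k + 1 := by
        rw [show (k:ℝ) + 1 = ((k+1 : ℕ):ℝ) by push_cast; ring]
        apply (Real.sqrt_lt' (by positivity)).mpr
        push_cast
        nlinarith [Nat.cast_nonneg (α := ℝ) k]
      calc Real.sqrt k * δ' < (k + 1) * δ' := by
            apply mul_lt_mul_of_pos_right hsq hδ'pos
        _ = δ := by
            rw [hδ']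
            field_simp
    linarith
  · intro t₀ ht₀ e he heq
    apply hy'bad
    refine ⟨t₀, ht₀, e, he, ?_⟩
    funext i
    rw [heq]
    exact (hycoord i).symm

end Helpers

set_option maxHeartbeats 2000000 in
/-- if `Ω ⊊ ℂ^k` is a nonempty proper open set biholomorphic to `ℂ^k`
which is Runge, then near every boundary point the Hausdorff dimension of `∂Ω` is at
least `2k − 1`. -/
theorem runge_FB_boundary_dimension (k : ℕ) (hk : 2 ≤ k) (Ω : Set (Ek k))
    (hopen : IsOpen Ω) (hne : Ω.Nonempty) (hproper : Ω ≠ Set.univ)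
    (hbihol : BiholToCk Ω) (hRunge : IsRunge Ω) :
    ∀ p ∈ frontier Ω, ∀ ε : ℝ, 0 < ε →
      (2 * k - 1 : ℝ≥0∞) ≤ dimH (frontier Ω ∩ Metric.ball p ε) := by
  intro p hp ε hε
  by_contra hlt'
  rw [not_le] at hlt'
  set S : Set (Ek k) := frontier Ω ∩ Metric.ball p ε with hS
  -- rewrite the dimension bound with a real exponent
  have hcast : (2 * (k:ℝ≥0∞) - 1) = ENNReal.ofReal (2*(k:ℝ) - 1) := by
    rw [ENNReal.ofReal_sub _ (by norm_num : (0:ℝ) ≤ 1)]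
    rw [show (2*(k:ℝ)) = ((2*k : ℕ) : ℝ) by push_cast; ring, ENNReal.ofReal_natCast]
    rw [ENNReal.ofReal_one]
    push_cast
    ring_nf
  rw [hcast] at hlt'
  have h2k1 : (1:ℝ) ≤ 2*(k:ℝ) - 1 := by
    have : (2:ℝ) ≤ (k:ℝ) := by exact_mod_cast hk
    linarith
  obtain ⟨r0, hr0nn, hr0lt1, hr0lt2⟩ := ENNReal.lt_iff_exists_real_btwn.mp hlt'
  have hr0lt : r0 < 2*(k:ℝ) - 1 :=
    (ENNReal.ofReal_lt_ofReal_iff (by linarith)).mp hr0lt2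
  set d : ℝ := max r0 1 with hd
  have hd1 : 1 ≤ d := le_max_right _ _
  have hd2 : d ≤ 2*(k:ℝ) - 1 := max_le hr0lt.le h2k1
  -- the Hausdorff measure of S in dimension d vanishes
  have hμ0 : μH[d] S = 0 := by
    have h0 : μH[(r0.toNNReal : ℝ)] S = 0 := by
      exact hausdorffMeasure_of_dimH_lt hr0lt1
    have h1 : μH[d] S ≤ μH[(r0.toNNReal : ℝ)] S := by
      apply MeasureTheory.Measure.hausdorffMeasure_mono
      rw [Real.coe_toNNReal r0 hr0nn]
      exact le_max_left _ _
    exact le_antisymm (h1.trans_eq h0) zero_le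
  have hpnotΩ : p ∉ Ω := by
    intro hpin
    rw [hopen.frontier_eq] at hp
    exact hp.2 hpin
  have hpS : p ∈ S := ⟨hp, mem_ball_self hε⟩
  by_cases hcase : ∀ x ∈ Metric.ball p (ε/8), x ∉ Ω → x ∈ frontier Ω
  · -- CASE A : near p, the complement of Ω is contained in the frontier.
    set g : ℝ → Ek k → Ek k :=
      fun θ e => Complex.exp (-(θ:ℂ)*Complex.I) • (e - p) with hg
    have hexpnorm : ∀ α : ℝ, ‖Complex.exp (-(α:ℂ)*Complex.I)‖ = 1 := by
      intro α
      rw [Complex.norm_exp]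
      simp
    have hexpdiff : ∀ α β : ℝ,
        ‖Complex.exp (-(α:ℂ)*Complex.I) - Complex.exp (-(β:ℂ)*Complex.I)‖ ≤ 2*|α - β| := by
      intro α β
      have hfactor : Complex.exp (-(α:ℂ)*Complex.I) - Complex.exp (-(β:ℂ)*Complex.I)
          = Complex.exp (-(β:ℂ)*Complex.I) * (Complex.exp (-((α:ℂ)-β)*Complex.I) - 1) := by
        rw [mul_sub, mul_one, ← Complex.exp_add]
        ring_nf
      rw [hfactor, norm_mul, hexpnorm, one_mul]
      rcases le_or_gt |α - β| 1 with hab | hab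
      · have habs : ‖(-((α:ℂ)-β)*Complex.I)‖ = |α - β| := by
          rw [norm_mul, Complex.norm_I, mul_one, norm_neg]
          rw [show ((α:ℂ) - β) = ((α - β : ℝ) : ℂ) by push_cast; ring, Complex.norm_real, Real.norm_eq_abs]
        have := Complex.norm_exp_sub_one_le (x := -((α:ℂ)-β)*Complex.I) (by rw [habs]; exact hab)
        rw [habs] at this
        exact_mod_cast this
      · have h1 : ‖Complex.exp (-((α:ℂ)-β)*Complex.I) - 1‖ ≤
            ‖Complex.exp (-((α:ℂ)-β)*Complex.I)‖ + ‖(1:ℂ)‖ := norm_sub_le _ _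
        have h2 : ‖Complex.exp (-((α:ℂ)-β)*Complex.I)‖ = 1 := by
          have := hexpnorm (α - β)
          rw [show ((α - β : ℝ) : ℂ) = (α:ℂ) - β by push_cast; ring] at this
          exact this
        rw [h2] at h1
        simp only [norm_one] at h1
        linarith
    have hLip : ∀ t ∈ Icc (-4:ℝ) 4, ∀ t' ∈ Icc (-4:ℝ) 4, ∀ e ∈ S, ∀ e' ∈ S,
        ‖g t e - g t' e'‖ ≤ (2*ε+2) * (|t - t'| + ‖e - e'‖) := by
      intro t _ t' _ e he e' he'
      have hsplit : g t e - g t' e' =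
          Complex.exp (-(t:ℂ)*Complex.I) • (e - e') +
          (Complex.exp (-(t:ℂ)*Complex.I) - Complex.exp (-(t':ℂ)*Complex.I)) • (e' - p) := by
        rw [hg]
        simp only [sub_smul, smul_sub]
        abel
      have he'p : ‖e' - p‖ ≤ ε := by
        have : e' ∈ Metric.ball p ε := he'.2
        rw [mem_ball, dist_eq_norm] at this
        exact this.le
      calc ‖g t e - g t' e'‖
          ≤ ‖Complex.exp (-(t:ℂ)*Complex.I) • (e - e')‖ +
            ‖(Complex.exp (-(t:ℂ)*Complex.I) - Complex.exp (-(t':ℂ)*Complex.I)) • (e' - p)‖ := by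
            rw [hsplit]; exact norm_add_le _ _
        _ ≤ 1 * ‖e - e'‖ + (2*|t - t'|) * ε := by
            apply add_le_add
            · rw [norm_smul, hexpnorm]
            · rw [norm_smul]
              exact mul_le_mul (hexpdiff t t') he'p (norm_nonneg _)
                (by positivity)
        _ ≤ (2*ε+2) * (|t - t'| + ‖e - e'‖) := by
            nlinarith [abs_nonneg (t - t'), norm_nonneg (e - e'), hε.le]
    obtain ⟨v, hvdist, hvavoid⟩ := avoid_lemma S d hd1 hd2 hμ0 g (2*ε+2)
      (by linarith) hLip 0 (ε/8) (by positivity)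
    have hvnorm : ‖v‖ < ε/8 := by
      rw [dist_zero_right] at hvdist
      exact hvdist
    have hcirc : ∀ ζ : ℂ, ‖ζ‖ = 1 → p + ζ • v ∈ Ω := by
      intro ζ hζ
      by_contra hnot
      have hxball : p + ζ • v ∈ Metric.ball p (ε/8) := by
        rw [mem_ball, dist_eq_norm]
        have : p + ζ • v - p = ζ • v := by abel
        rw [this, norm_smul, hζ, one_mul]
        exact hvnorm
      have hxf : p + ζ • v ∈ frontier Ω := hcase _ hxball hnot
      have hxS : p + ζ • v ∈ S :=
        ⟨hxf, ball_subset_ball (by linarith) hxball⟩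
      set θ : ℝ := Complex.arg ζ with hθ
      have hθmem : θ ∈ Icc (-4:ℝ) 4 := by
        constructor
        · linarith [Complex.neg_pi_lt_arg ζ, Real.pi_le_four]
        · linarith [Complex.arg_le_pi ζ, Real.pi_le_four]
      have hζexp : Complex.exp ((θ:ℂ)*Complex.I) = ζ := by
        have h1 := Complex.norm_mul_exp_arg_mul_I ζ
        have h2 : ‖ζ‖ = 1 := hζ
        rw [h2] at h1
        simpa using h1
      apply hvavoid θ hθmem _ hxS
      show Complex.exp (-(θ:ℂ)*Complex.I) • (p + ζ • v - p) = v
      have h3 : p + ζ • v - p = ζ • v := by abel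
      rw [h3, smul_smul, ← hζexp, ← Complex.exp_add]
      have h4 : -(θ:ℂ)*Complex.I + (θ:ℂ)*Complex.I = 0 := by ring
      rw [h4, Complex.exp_zero, one_smul]
    have hdisc := disc_lemma hopen hbihol hRunge p v hcirc 0 (by norm_num)
    rw [zero_smul, add_zero] at hdisc
    exact hpnotΩ hdisc
  · -- CASE B : there is a point of the complement near p away from the frontier.
    push_neg at hcase
    obtain ⟨u, huball, huout, hufr⟩ := hcase
    have hu2 : u ∉ closure Ω := by
      intro hc
      apply hufr
      rw [hopen.frontier_eq]
      exact ⟨hc, huout⟩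
    obtain ⟨δ₂, hδ₂pos, hδ₂sub⟩ : ∃ δ₂ > 0, Metric.ball u δ₂ ⊆ (closure Ω)ᶜ :=
      Metric.isOpen_iff.mp isClosed_closure.isOpen_compl u hu2
    have hpcl : p ∈ closure Ω := frontier_subset_closure hp
    obtain ⟨a, haΩ, hadist⟩ : ∃ a ∈ Ω, dist p a < ε/8 :=
      Metric.mem_closure_iff.mp hpcl _ (by positivity)
    obtain ⟨δ₁, hδ₁pos, hδ₁sub⟩ : ∃ δ₁ > 0, Metric.ball a δ₁ ⊆ Ω :=
      Metric.isOpen_iff.mp hopen a haΩ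
    set δ : ℝ := min (min δ₁ δ₂) (ε/8) with hδdef
    have hδpos : 0 < δ := lt_min (lt_min hδ₁pos hδ₂pos) (by positivity)
    set g : ℝ → Ek k → Ek k := fun t e => e - t • (u - a) with hg
    set L : ℝ := ‖u - a‖ + 1 with hLdef
    have hL : 1 ≤ L := by
      rw [hLdef]; linarith [norm_nonneg (u - a)]
    have hLip : ∀ t ∈ Icc (-4:ℝ) 4, ∀ t' ∈ Icc (-4:ℝ) 4, ∀ e ∈ S, ∀ e' ∈ S,
        ‖g t e - g t' e'‖ ≤ L * (|t - t'| + ‖e - e'‖) := by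
      intro t _ t' _ e _ e' _
      have hsplit : g t e - g t' e' = (e - e') - (t - t') • (u - a) := by
        rw [hg]
        simp only [sub_smul]
        abel
      calc ‖g t e - g t' e'‖ ≤ ‖e - e'‖ + ‖(t - t') • (u - a)‖ := by
            rw [hsplit]; exact norm_sub_le _ _
        _ = ‖e - e'‖ + |t - t'| * ‖u - a‖ := by rw [norm_smul, Real.norm_eq_abs]
        _ ≤ L * (|t - t'| + ‖e - e'‖) := by
            rw [hLdef]
            nlinarith [abs_nonneg (t - t'), norm_nonneg (e - e'), norm_nonneg (u - a)]
    obtain ⟨y, hydist, hyavoid⟩ := avoid_lemma S d hd1 hd2 hμ0 g L hL hLip a δ hδpos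
    have hyΩ : y ∈ Ω := hδ₁sub (by
      rw [mem_ball]
      exact hydist.trans_le ((min_le_left _ _).trans (min_le_left _ _)))
    have hua : ‖u - a‖ < ε/4 := by
      have h1 : dist u p < ε/8 := mem_ball.mp huball
      have h2 : dist p a < ε/8 := hadist
      calc ‖u - a‖ = dist u a := (dist_eq_norm _ _).symm
        _ ≤ dist u p + dist p a := dist_triangle _ _ _
        _ < ε/4 := by linarith
    set σ : ℝ → Ek k := fun t => y + t • (u - a) with hσ
    have hσcont : Continuous σ := by
      apply continuous_const.add
      exact (continuous_id.smul continuous_const)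
    have hσ0eq : σ 0 = y := by
      show y + (0:ℝ) • (u - a) = y
      rw [zero_smul, add_zero]
    have hσ0 : σ 0 ∈ Ω := by rw [hσ0eq]; exact hyΩ
    have hσ1 : σ 1 ∈ (closure Ω)ᶜ := by
      apply hδ₂sub
      rw [mem_ball]
      have : σ 1 = y + (u - a) := by
        show y + (1:ℝ) • (u - a) = y + (u - a)
        rw [one_smul]
      rw [this, dist_eq_norm]
      have heq : y + (u - a) - u = y - a := by abel
      rw [heq, ← dist_eq_norm]
      exact hydist.trans_le ((min_le_left _ _).trans (min_le_right _ _))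
    have hσfr : ∀ t ∈ Icc (0:ℝ) 1, σ t ∉ frontier Ω := by
      intro t ht hfr
      have hσball : σ t ∈ Metric.ball p ε := by
        rw [mem_ball, dist_eq_norm]
        have heq : σ t - p = (y - a) + (a - p) + t • (u - a) := by
          rw [hσ]; show y + t • (u - a) - p = _; abel
        rw [heq]
        have h1 : ‖y - a‖ < δ := by rw [← dist_eq_norm]; exact hydist
        have h2 : ‖a - p‖ < ε/8 := by
          rw [← dist_eq_norm, dist_comm]; exact hadist
        have h3 : ‖t • (u - a)‖ ≤ ‖u - a‖ := by
          rw [norm_smul, Real.norm_eq_abs]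
          have : |t| ≤ 1 := by rw [abs_le]; exact ⟨by linarith [ht.1], ht.2⟩
          nlinarith [norm_nonneg (u - a)]
        have hδε : δ ≤ ε/8 := min_le_right _ _
        calc ‖(y - a) + (a - p) + t • (u - a)‖
            ≤ ‖y - a‖ + ‖a - p‖ + ‖t • (u - a)‖ := norm_add₃_le
          _ < ε := by linarith
      have hσS : σ t ∈ S := ⟨hfr, hσball⟩
      apply hyavoid t ⟨by linarith [ht.1], by linarith [ht.2]⟩ (σ t) hσS
      show σ t - t • (u - a) = y
      have : σ t = y + t • (u - a) := rfl
      rw [this]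
      abel
    have hcov : σ '' Icc (0:ℝ) 1 ⊆ Ω ∪ (closure Ω)ᶜ := by
      rintro x ⟨t, ht, rfl⟩
      by_cases hx : σ t ∈ closure Ω
      · left
        rcases (mem_union _ _ _).mp (by
          have hcl : closure Ω = Ω ∪ frontier Ω := by
            rw [hopen.frontier_eq]
            rw [Set.union_diff_cancel' (le_refl Ω) subset_closure]
          rw [hcl] at hx
          exact hx) with h | h
        · exact h
        · exact absurd h (hσfr t ht)
      · right; exact hx
    have hpre : IsPreconnected (σ '' Icc (0:ℝ) 1) :=
      isPreconnected_Icc.image σ hσcont.continuousOn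
    obtain ⟨x, _, hx1, hx2⟩ := hpre Ω (closure Ω)ᶜ hopen isClosed_closure.isOpen_compl hcov
      ⟨σ 0, mem_image_of_mem σ (left_mem_Icc.mpr zero_le_one), hσ0⟩
      ⟨σ 1, mem_image_of_mem σ (right_mem_Icc.mpr zero_le_one), hσ1⟩
    exact hx2 (subset_closure hx1)

end
end

section
/- Let Ω ⊆ ℂ^k be an open dense set with 0 ∉ Ω, and suppose that for every compact set K ⊆ Ω its polynomial hull K̂ is contained in Ω. Then for every z ∈ ℂ^k the circle {e^{iθ} z : θ ∈ ℝ} intersects the boundary ∂Ω. -/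
open Filter Metric Set
open scoped ENNReal

noncomputable section

/-- The polynomial hull of a set `K ⊆ ℂ^k`. -/
def polyHull {k : ℕ} (K : Set (Ek k)) : Set (Ek k) :=
  {z | ∀ p : MvPolynomial (Fin k) ℂ,
    ‖MvPolynomial.eval (fun i => z i) p‖ ≤ ⨆ w ∈ K, ‖MvPolynomial.eval (fun i => w i) p‖}

/-- if `Ω ⊆ ℂ^k` is open and dense, `0 ∉ Ω`, and the polynomial hull of
every compact subset of `Ω` is contained in `Ω`, then for every `z ∈ ℂ^k` the circle
`{e^{iθ} z : θ ∈ ℝ}` meets `∂Ω`. -/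
theorem circle_meets_boundary (k : ℕ) (Ω : Set (Ek k))
    (hopen : IsOpen Ω) (hdense : Dense Ω) (h0 : (0 : Ek k) ∉ Ω)
    (hhull : ∀ K : Set (Ek k), K ⊆ Ω → IsCompact K → polyHull K ⊆ Ω) :
    ∀ z : Ek k, ∃ θ : ℝ, Complex.exp (θ * Complex.I) • z ∈ frontier Ω := by
  intro z
  have hfront : frontier Ω = Ωᶜ := by
    rw [frontier, hdense.closure_eq, hopen.interior_eq]
    simp [Set.compl_eq_univ_diff]
  by_contra hcon
  push_neg at hcon
  -- every point of the circle is in Ω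
  have hcirc : ∀ c : ℂ, ‖c‖ = 1 → c • z ∈ Ω := by
    intro c hc
    obtain ⟨θ, hθ⟩ : ∃ θ : ℝ, Complex.exp (θ * Complex.I) = c := by
      refine ⟨Complex.arg c, ?_⟩
      have := Complex.norm_mul_exp_arg_mul_I c
      rwa [show ‖c‖ = 1 from hc, Complex.ofReal_one, one_mul] at this
    have := hcon θ
    rw [hfront, Set.notMem_compl_iff, hθ] at this
    exact this
  set K : Set (Ek k) := (fun c : ℂ => c • z) '' (sphere (0 : ℂ) 1) with hK
  have hKΩ : K ⊆ Ω := by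
    rintro _ ⟨c, hc, rfl⟩
    exact hcirc c (by simpa using hc)
  have hKc : IsCompact K :=
    (isCompact_sphere (0 : ℂ) 1).image (continuous_id.smul continuous_const)
  have hsm : ∀ c : ℂ, (fun i => (c • z : Ek k) i) = fun i => c * z i := by
    intro c; funext i; simp
  have h0hull : (0 : Ek k) ∈ polyHull K := by
    intro p
    set q : Polynomial ℂ :=
      MvPolynomial.eval₂ Polynomial.C (fun i => Polynomial.C (z i) * Polynomial.X) p with hq
    have key : ∀ c : ℂ, Polynomial.eval c q = MvPolynomial.eval (fun i => c * z i) p := by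
      intro c
      have h1 := MvPolynomial.eval₂_comp_left (Polynomial.evalRingHom c) Polynomial.C
        (fun i => Polynomial.C (z i) * Polynomial.X) p
      simp only [hq, Polynomial.coe_evalRingHom] at h1 ⊢
      rw [h1]
      rw [show (Polynomial.evalRingHom c).comp Polynomial.C = RingHom.id ℂ from RingHom.ext fun x => Polynomial.eval_C]
      rw [MvPolynomial.eval₂_id]
      have harg : (Polynomial.eval c ∘ fun i => Polynomial.C (z i) * Polynomial.X)
          = fun i => c * z i := by
        funext i
        simp only [Function.comp_apply, Polynomial.eval_mul, Polynomial.eval_C,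
          Polynomial.eval_X]
        exact mul_comm _ _
      rw [harg]
    set g : Ek k → ℝ := fun w => ‖MvPolynomial.eval (fun i => w i) p‖ with hg
    have hbdd : BddAbove (g '' K) := by
      rw [hK, Set.image_image]
      have heq : (fun c : ℂ => g (c • z)) = fun c => ‖Polynomial.eval c q‖ := by
        funext c
        simp only [hg]
        rw [hsm c, ← key c]
      rw [heq]
      exact (isCompact_sphere (0 : ℂ) 1).bddAbove_image (q.continuous.norm.continuousOn)
    have hble : ∀ w ∈ K, g w ≤ ⨆ w ∈ K, g w := by
      intro w hw
      obtain ⟨M, hM⟩ := hbdd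
      have hbdd2 : BddAbove (Set.range fun w => ⨆ _ : w ∈ K, g w) := by
        refine ⟨max M 0, ?_⟩
        rintro _ ⟨w', rfl⟩
        dsimp only
        by_cases hw' : w' ∈ K
        · rw [ciSup_pos (f := fun _ : w' ∈ K => g w') hw']
          exact le_max_of_le_left (hM ⟨w', hw', rfl⟩)
        · haveI : IsEmpty (w' ∈ K) := ⟨hw'⟩
          rw [Real.iSup_of_isEmpty]
          exact le_max_right _ _
      calc g w = ⨆ _ : w ∈ K, g w := (ciSup_pos (f := fun _ : w ∈ K => g w) hw).symm
        _ ≤ ⨆ w ∈ K, g w := le_ciSup hbdd2 w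
    have hmax : ∀ c ∈ sphere (0 : ℂ) 1, ‖Polynomial.eval c q‖ ≤ ⨆ w ∈ K, g w := by
      intro c hc
      have : ‖Polynomial.eval c q‖ = g (c • z) := by
        simp only [hg]; rw [hsm c, ← key c]
      rw [this]
      exact hble _ ⟨c, hc, rfl⟩
    have h01 : ‖Polynomial.eval (0 : ℂ) q‖ ≤ ⨆ w ∈ K, g w := by
      have hdiff : DiffContOnCl ℂ (fun c => Polynomial.eval c q) (ball (0 : ℂ) 1) :=
        (q.differentiable).diffContOnCl
      exact Complex.norm_le_of_forall_mem_frontier_norm_le (isBounded_ball)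
        hdiff (fun w hw => hmax w (by rwa [frontier_ball _ one_ne_zero] at hw))
        (subset_closure (by simp))
    have hz0 : (fun i => (0 : Ek k) i) = fun i => (0 : ℂ) * z i := by
      funext i; simp
    calc ‖MvPolynomial.eval (fun i => (0 : Ek k) i) p‖
        = ‖Polynomial.eval (0 : ℂ) q‖ := by rw [hz0, ← key 0]
      _ ≤ ⨆ w ∈ K, g w := h01
  exact h0 (hhull K hKΩ hKc h0hull)

end
end
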